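/- arXiv:2507.22203 — 5 statements merged into one kernel-verified Lean document; each statement's English description precedes it below -/
import Mathlib

section
/- Let D and ℓ be coprime positive integers, let χ be a Dirichlet character modulo D, and let m, n be integers. Let ℓ̄ be any integer inverse to ℓ modulo D and let D̄ be any integer inverse to D modulo ℓ. Then S_χ(m, n; Dℓ) = S_χ(mℓ̄, nℓ̄; D) · S(mD̄, nD̄; ℓ). -/
/-- The J-Bessel function `J_ν(x)`, defined for real `ν ≥ 0` and `x > 0` by
`J_ν(x) = (2(x/2)^ν / (Γ(ν+1/2)Γ(1/2))) ∫_0^{π/2} sin(θ)^{2ν} cos(x cos θ) dθ`. -/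
noncomputable def besselJ (ν x : ℝ) : ℝ :=
  2 * (x / 2) ^ ν / (Real.Gamma (ν + 1 / 2) * Real.Gamma (1 / 2)) *
    ∫ θ in (0 : ℝ)..(Real.pi / 2), Real.sin θ ^ (2 * ν) * Real.cos (x * Real.cos θ)

/-- The Kloosterman sum `S(m, n; c) = Σ_{x ∈ (ℤ/cℤ)ˣ} e((mx + n x̄)/c)`. -/
noncomputable def klSum (m n : ℤ) (c : ℕ) : ℂ :=
  ∑ x ∈ Finset.filter (fun x => Nat.Coprime x c) (Finset.range c),
    Complex.exp (2 * Real.pi * Complex.I *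
      ((m : ℂ) * (x : ℂ) + (n : ℂ) * ((((x : ZMod c)⁻¹ : ZMod c).val : ℕ) : ℂ)) / (c : ℂ))

/-- The twisted Kloosterman sum `S_χ(m, n; c) = Σ_{x ∈ (ℤ/cℤ)ˣ} χ(x mod D) e((mx + n x̄)/c)`
for a Dirichlet character `χ` mod `D`. -/
noncomputable def klSumT {D : ℕ} (χ : DirichletCharacter ℂ D) (m n : ℤ) (c : ℕ) : ℂ :=
  ∑ x ∈ Finset.filter (fun x => Nat.Coprime x c) (Finset.range c),
    χ ((x : ℕ) : ZMod D) * Complex.exp (2 * Real.pi * Complex.I *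
      ((m : ℂ) * (x : ℂ) + (n : ℂ) * ((((x : ZMod c)⁻¹ : ZMod c).val : ℕ) : ℂ)) / (c : ℂ))

/-- The quadratic Dirichlet character mod a prime `D` (the Legendre symbol `(·/D)`),
with values in `ℂ`. -/
noncomputable def omegaChar (D : ℕ) (hD : D.Prime) : DirichletCharacter ℂ D :=
  letI : Fact D.Prime := ⟨hD⟩
  (quadraticChar (ZMod D)).ringHomComp (Int.castRingHom ℂ)

/-- `φ_k(m,n) = δ_{m,n} + 2π i^k Σ_{c > 0, D ∣ c} c⁻¹ S_ω(m,n;c) J_{k-1}(4π√(mn)/c)`. -/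
noncomputable def phiK (D : ℕ) (χ : DirichletCharacter ℂ D) (k m n : ℕ) : ℂ :=
  (if m = n then 1 else 0) +
    2 * Real.pi * Complex.I ^ k *
      ∑' c : {c : ℕ // 0 < c ∧ D ∣ c},
        ((c : ℕ) : ℂ)⁻¹ * klSumT χ m n c *
          ((besselJ ((k : ℝ) - 1) (4 * Real.pi * Real.sqrt ((m : ℝ) * n) / ((c : ℕ) : ℝ)) : ℝ) : ℂ)

/-- `Ψ_k^1(D) = 2π D^{-1/2} Σ_{ℓ ≥ 1, D ∤ ℓ} ℓ^{-1/2} σ₀(ℓ) |J_{k-1}(4π/ℓ)|`. -/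
noncomputable def Psi1 (k D : ℕ) : ℝ :=
  2 * Real.pi * (D : ℝ) ^ (-(1 / 2) : ℝ) *
    ∑' ℓ : {ℓ : ℕ // 0 < ℓ ∧ ¬ D ∣ ℓ},
      ((ℓ : ℕ) : ℝ) ^ (-(1 / 2) : ℝ) * ((ℓ : ℕ).divisors.card : ℝ) *
        |besselJ ((k : ℝ) - 1) (4 * Real.pi / ((ℓ : ℕ) : ℝ))|

/-- `Ψ_k^2(D) = 2π Σ_{m ≥ 1} (Dm)^{-1/2} (√D σ₀(Dm) + σ₀(D²m)) |J_{k-1}(4π/(Dm))|`. -/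
noncomputable def Psi2 (k D : ℕ) : ℝ :=
  2 * Real.pi *
    ∑' m : ℕ+,
      ((D : ℝ) * (m : ℕ)) ^ (-(1 / 2) : ℝ) *
        (Real.sqrt D * (((D * (m : ℕ)).divisors.card : ℝ)) + ((D ^ 2 * (m : ℕ)).divisors.card : ℝ)) *
        |besselJ ((k : ℝ) - 1) (4 * Real.pi / ((D : ℝ) * (m : ℕ)))|

/-- The Riemann zeta function at a real argument. -/
noncomputable def zetaR (s : ℝ) : ℝ := (riemannZeta (s : ℂ)).re

noncomputable def Ee (c : ℕ) (a : ℤ) : ℂ :=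
  Complex.exp (2 * Real.pi * Complex.I * (a : ℂ) / (c : ℂ))

lemma Ee_congr {c : ℕ} (hc : 0 < c) {a b : ℤ} (h : a ≡ b [ZMOD (c : ℤ)]) :
    Ee c a = Ee c b := by
  obtain ⟨k, hk⟩ := h.dvd
  have hb : b = a + c * k := by linarith [hk]
  have hc' : (c : ℂ) ≠ 0 := Nat.cast_ne_zero.mpr hc.ne'
  rw [Ee, Ee, hb]
  push_cast
  rw [show 2 * (Real.pi : ℂ) * Complex.I * ((a : ℂ) + c * k) / c
      = 2 * Real.pi * Complex.I * a / c + k * (2 * Real.pi * Complex.I) by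
    field_simp]
  rw [Complex.exp_add, Complex.exp_int_mul_two_pi_mul_I, mul_one]

lemma Ee_split (D l : ℕ) (hD : 0 < D) (hl : 0 < l) (hco : Nat.Coprime D l)
    (lbar Dbar : ℤ)
    (hlbar : (l : ℤ) * lbar ≡ 1 [ZMOD (D : ℤ)])
    (hDbar : (D : ℤ) * Dbar ≡ 1 [ZMOD (l : ℤ)]) (t : ℤ) :
    Ee (D * l) t = Ee D (t * lbar) * Ee l (t * Dbar) := by
  have h1 : (D : ℤ) ∣ (l * lbar + D * Dbar - 1) := by
    have := (hlbar.symm).dvd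
    obtain ⟨k, hk⟩ := this
    exact ⟨k + Dbar, by linarith⟩
  have h2 : (l : ℤ) ∣ (l * lbar + D * Dbar - 1) := by
    obtain ⟨k, hk⟩ := (hDbar.symm).dvd
    exact ⟨k + lbar, by linarith⟩
  have hcoZ : IsCoprime (D : ℤ) (l : ℤ) := by
    rw [Int.isCoprime_iff_gcd_eq_one]; exact_mod_cast hco
  obtain ⟨j, hj⟩ := hcoZ.mul_dvd h1 h2
  have hjC : (l : ℂ) * lbar + D * Dbar = 1 + D * l * j := by
    have : (l : ℤ) * lbar + D * Dbar = 1 + D * l * j := by linarith [hj]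
    exact_mod_cast congrArg (Int.cast : ℤ → ℂ) this
  have hD' : (D : ℂ) ≠ 0 := Nat.cast_ne_zero.mpr hD.ne'
  have hl' : (l : ℂ) ≠ 0 := Nat.cast_ne_zero.mpr hl.ne'
  rw [Ee, Ee, Ee, ← Complex.exp_add]
  push_cast
  rw [show 2 * (Real.pi : ℂ) * Complex.I * (t * lbar) / D
        + 2 * Real.pi * Complex.I * (t * Dbar) / l
      = 2 * Real.pi * Complex.I * t / (D * l)
        + (t * j) * (2 * Real.pi * Complex.I) by
    field_simp
    linear_combination (t:ℂ) * hjC]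
  rw [Complex.exp_add, show ((t : ℂ) * j) = (((t * j : ℤ) : ℤ) : ℂ) by push_cast; ring,
    Complex.exp_int_mul_two_pi_mul_I, mul_one]

lemma sum_coprime_eq (c : ℕ) [NeZero c] (f : ℕ → ℂ) :
    ∑ x ∈ Finset.filter (fun x => Nat.Coprime x c) (Finset.range c), f x
      = ∑ u : (ZMod c)ˣ, f (u : ZMod c).val := by
  refine Finset.sum_bij'
    (i := fun x hx => ZMod.unitOfCoprime x (Finset.mem_filter.mp hx).2)
    (j := fun u _ => (u : ZMod c).val) ?_ ?_ ?_ ?_ ?_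
  · intro x hx; exact Finset.mem_univ _
  · intro u _
    exact Finset.mem_filter.mpr ⟨Finset.mem_range.mpr (ZMod.val_lt _),
      ZMod.val_coe_unit_coprime u⟩
  · intro x hx
    obtain ⟨hx1, hx2⟩ := Finset.mem_filter.mp hx
    simp only [ZMod.coe_unitOfCoprime]
    exact ZMod.val_natCast_of_lt (Finset.mem_range.mp hx1)
  · intro u _
    ext
    simp [ZMod.coe_unitOfCoprime, ZMod.natCast_val, ZMod.cast_id]
  · intro x hx
    rw [ZMod.coe_unitOfCoprime,
      ZMod.val_natCast_of_lt (Finset.mem_range.mp (Finset.mem_filter.mp hx).1)]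

lemma klSum_eq_units (m n : ℤ) (c : ℕ) [NeZero c] :
    klSum m n c = ∑ u : (ZMod c)ˣ,
      Ee c (m * ((u : ZMod c).val : ℤ) + n * (((u⁻¹ : (ZMod c)ˣ) : ZMod c).val : ℤ)) := by
  rw [klSum, sum_coprime_eq]
  refine Finset.sum_congr rfl fun u _ => ?_
  rw [Ee]
  congr 1
  rw [show (((u : ZMod c).val : ℕ) : ZMod c) = (u : ZMod c) from by
      rw [ZMod.natCast_val, ZMod.cast_id], ZMod.inv_coe_unit]
  push_cast
  ring

lemma klSumT_eq_units {D : ℕ} (χ : DirichletCharacter ℂ D) (m n : ℤ) (c : ℕ) [NeZero c] :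
    klSumT χ m n c = ∑ u : (ZMod c)ˣ,
      χ (((u : ZMod c).val : ℕ) : ZMod D) *
      Ee c (m * ((u : ZMod c).val : ℤ) + n * (((u⁻¹ : (ZMod c)ˣ) : ZMod c).val : ℤ)) := by
  rw [klSumT, sum_coprime_eq]
  refine Finset.sum_congr rfl fun u _ => ?_
  congr 1
  rw [Ee]
  congr 1
  rw [show (((u : ZMod c).val : ℕ) : ZMod c) = (u : ZMod c) from by
      rw [ZMod.natCast_val, ZMod.cast_id], ZMod.inv_coe_unit]
  push_cast
  ring

lemma crt_fst (D l : ℕ) [NeZero D] [NeZero l] (hco : Nat.Coprime D l) (x : ZMod (D * l)) :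
    (ZMod.chineseRemainder hco x).1 = ((x.val : ℕ) : ZMod D) := by
  have : NeZero (D * l) := ⟨Nat.mul_ne_zero (NeZero.ne D) (NeZero.ne l)⟩
  have h : (ZMod.chineseRemainder hco x).1 = (ZMod.cast x : ZMod D × ZMod l).1 := rfl
  rw [h, ← ZMod.natCast_val x]; rfl

lemma crt_snd (D l : ℕ) [NeZero D] [NeZero l] (hco : Nat.Coprime D l) (x : ZMod (D * l)) :
    (ZMod.chineseRemainder hco x).2 = ((x.val : ℕ) : ZMod l) := by
  have : NeZero (D * l) := ⟨Nat.mul_ne_zero (NeZero.ne D) (NeZero.ne l)⟩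
  have h : (ZMod.chineseRemainder hco x).2 = (ZMod.cast x : ZMod D × ZMod l).2 := rfl
  rw [h, ← ZMod.natCast_val x]; rfl

/-- Multiplicativity of twisted Kloosterman sums: if `gcd(D, ℓ) = 1`, `χ` is a Dirichlet
character mod `D`, `ℓ̄` is an inverse of `ℓ` mod `D` and `D̄` is an inverse of `D` mod `ℓ`,
then `S_χ(m, n; Dℓ) = S_χ(mℓ̄, nℓ̄; D) · S(mD̄, nD̄; ℓ)`. -/
theorem klSumT_mul (D ℓ : ℕ) (hD : 0 < D) (hℓ : 0 < ℓ) (hco : Nat.Coprime D ℓ)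
    (χ : DirichletCharacter ℂ D) (m n lbar Dbar : ℤ)
    (hlbar : (ℓ : ℤ) * lbar ≡ 1 [ZMOD (D : ℤ)])
    (hDbar : (D : ℤ) * Dbar ≡ 1 [ZMOD (ℓ : ℤ)]) :
    klSumT χ m n (D * ℓ) =
      klSumT χ (m * lbar) (n * lbar) D * klSum (m * Dbar) (n * Dbar) ℓ := by
  
  haveI : NeZero D := ⟨hD.ne'⟩
  haveI : NeZero ℓ := ⟨hℓ.ne'⟩
  haveI : NeZero (D * ℓ) := ⟨Nat.mul_ne_zero hD.ne' hℓ.ne'⟩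
  rw [klSumT_eq_units, klSumT_eq_units, klSum_eq_units, Finset.sum_mul_sum,
    ← Fintype.sum_prod_type']
  set ψ : (ZMod (D * ℓ))ˣ ≃* (ZMod D)ˣ × (ZMod ℓ)ˣ :=
    (Units.mapEquiv (ZMod.chineseRemainder hco).toMulEquiv).trans MulEquiv.prodUnits with hψ
  refine Fintype.sum_equiv ψ.toEquiv _ _ fun u => ?_
  set a : (ZMod D)ˣ := (ψ u).1 with ha
  set b : (ZMod ℓ)ˣ := (ψ u).2 with hb
  have hainv : ((ψ u⁻¹).1 : (ZMod D)ˣ) = a⁻¹ := by rw [map_inv]; rfl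
  have hbinv : ((ψ u⁻¹).2 : (ZMod ℓ)ˣ) = b⁻¹ := by rw [map_inv]; rfl
  have hca : (((u : ZMod (D * ℓ)).val : ℕ) : ZMod D) = (a : ZMod D) := by
    rw [← crt_fst D ℓ hco]; rfl
  have hcb : (((u : ZMod (D * ℓ)).val : ℕ) : ZMod ℓ) = (b : ZMod ℓ) := by
    rw [← crt_snd D ℓ hco]; rfl
  have hca' : ((((u⁻¹ : (ZMod (D * ℓ))ˣ) : ZMod (D * ℓ)).val : ℕ) : ZMod D)
      = ((a⁻¹ : (ZMod D)ˣ) : ZMod D) := by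
    rw [← crt_fst D ℓ hco, ← hainv]; rfl
  have hcb' : ((((u⁻¹ : (ZMod (D * ℓ))ˣ) : ZMod (D * ℓ)).val : ℕ) : ZMod ℓ)
      = ((b⁻¹ : (ZMod ℓ)ˣ) : ZMod ℓ) := by
    rw [← crt_snd D ℓ hco, ← hbinv]; rfl
  rw [Ee_split D ℓ hD hℓ hco lbar Dbar hlbar hDbar]
  have e1 : Ee D ((m * ((u : ZMod (D * ℓ)).val : ℤ)
        + n * (((u⁻¹ : (ZMod (D * ℓ))ˣ) : ZMod (D * ℓ)).val : ℤ)) * lbar)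
      = Ee D (m * lbar * ((a : ZMod D).val : ℤ)
        + n * lbar * (((a⁻¹ : (ZMod D)ˣ) : ZMod D).val : ℤ)) := by
    apply Ee_congr hD
    rw [← ZMod.intCast_eq_intCast_iff]
    push_cast
    rw [hca, hca']
    rw [show ((((a : ZMod D).val : ℕ)) : ZMod D) = (a : ZMod D) from by
      rw [ZMod.natCast_val, ZMod.cast_id]]
    rw [show ((((a⁻¹ : (ZMod D)ˣ) : ZMod D).val : ℕ) : ZMod D) = ((a⁻¹ : (ZMod D)ˣ) : ZMod D) from by
      rw [ZMod.natCast_val, ZMod.cast_id]]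
    ring
  have e2 : Ee ℓ ((m * ((u : ZMod (D * ℓ)).val : ℤ)
        + n * (((u⁻¹ : (ZMod (D * ℓ))ˣ) : ZMod (D * ℓ)).val : ℤ)) * Dbar)
      = Ee ℓ (m * Dbar * ((b : ZMod ℓ).val : ℤ)
        + n * Dbar * (((b⁻¹ : (ZMod ℓ)ˣ) : ZMod ℓ).val : ℤ)) := by
    apply Ee_congr hℓ
    rw [← ZMod.intCast_eq_intCast_iff]
    push_cast
    rw [hcb, hcb']
    rw [show ((((b : ZMod ℓ).val : ℕ)) : ZMod ℓ) = (b : ZMod ℓ) from by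
      rw [ZMod.natCast_val, ZMod.cast_id]]
    rw [show ((((b⁻¹ : (ZMod ℓ)ˣ) : ZMod ℓ).val : ℕ) : ZMod ℓ) = ((b⁻¹ : (ZMod ℓ)ˣ) : ZMod ℓ) from by
      rw [ZMod.natCast_val, ZMod.cast_id]]
    ring
  have echi : χ ((((u : ZMod (D * ℓ)).val : ℕ)) : ZMod D)
      = χ ((((a : ZMod D).val : ℕ)) : ZMod D) := by
    rw [hca, show ((((a : ZMod D).val : ℕ)) : ZMod D) = (a : ZMod D) from by
      rw [ZMod.natCast_val, ZMod.cast_id]]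
  rw [e1, e2, echi]
  have hψu : ψ.toEquiv u = ψ u := rfl
  rw [hψu, ← ha, ← hb]; exact (mul_assoc _ _ _).symm
end

section
/- Let D ≥ 7 be a prime with D ≡ 3 (mod 4) and let k ≥ 19 be an odd integer. Then |φ_k(1,1) − φ_k(D², 1)| > 0. -/
section AuxLemmas

open Real

lemma sinInt_rec' (n : ℕ) : (∫ θ in (0:ℝ)..(π/2), Real.sin θ ^ (n+2))
    = (n+1)/(n+2) * ∫ θ in (0:ℝ)..(π/2), Real.sin θ ^ n := by
  rw [integral_sin_pow n]
  simp

lemma sinInt_val' : ∀ m : ℕ, (∫ θ in (0:ℝ)..(π/2), Real.sin θ ^ (2*m))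
    = (∏ i ∈ Finset.range m, (2*(i:ℝ)+1)/(2*i+2)) * (π/2) := by
  intro m
  induction m with
  | zero => simp
  | succ m ih =>
    have h : 2*(m+1) = 2*m+2 := by ring
    rw [h, sinInt_rec', ih, Finset.prod_range_succ]
    push_cast
    ring

lemma sinInt36' : (∫ θ in (0:ℝ)..(π/2), Real.sin θ ^ 36)
    = (2268783825 / 34359738368 : ℝ) * π := by
  have := sinInt_val' 18
  norm_num [Finset.prod_range_succ] at this
  linarith [this]

lemma gammaHalf' : ∀ n : ℕ, Real.Gamma ((n:ℝ) + 1/2)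
    = (∏ i ∈ Finset.range n, ((i:ℝ)+1/2)) * Real.sqrt π := by
  intro n
  induction n with
  | zero => simpa using Real.Gamma_one_half_eq
  | succ n ih =>
    have h : ((n+1:ℕ):ℝ) + 1/2 = ((n:ℝ) + 1/2) + 1 := by push_cast; ring
    have hne : ((n:ℝ) + 1/2) ≠ 0 := by positivity
    rw [h, Real.Gamma_add_one hne, ih, Finset.prod_range_succ]
    ring

lemma gamma_ratio' (n : ℕ) (hn : 18 ≤ n) :
    (2*π)^n * Real.Gamma ((18:ℝ)+1/2) ≤ (2*π)^18 * Real.Gamma ((n:ℝ)+1/2) := by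
  induction n, hn using Nat.le_induction with
  | base => norm_num
  | succ n hn ih =>
    have h : ((n+1:ℕ):ℝ) + 1/2 = ((n:ℝ) + 1/2) + 1 := by push_cast; ring
    have hne : ((n:ℝ) + 1/2) ≠ 0 := by positivity
    rw [h, Real.Gamma_add_one hne, pow_succ]
    have hpi : 2*π ≤ (n:ℝ) + 1/2 := by
      have : (18:ℝ) ≤ (n:ℝ) := by exact_mod_cast hn
      nlinarith [Real.pi_lt_d2]
    have hg18 : 0 < Real.Gamma ((18:ℝ)+1/2) := Real.Gamma_pos_of_pos (by norm_num)
    have hgn : 0 < Real.Gamma ((n:ℝ)+1/2) := Real.Gamma_pos_of_pos (by positivity)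
    have h2p : (0:ℝ) < 2*π := by positivity
    calc (2*π)^n * (2*π) * Real.Gamma ((18:ℝ)+1/2)
        = (2*π) * ((2*π)^n * Real.Gamma ((18:ℝ)+1/2)) := by ring
      _ ≤ (2*π) * ((2*π)^18 * Real.Gamma ((n:ℝ)+1/2)) := by
          exact mul_le_mul_of_nonneg_left ih h2p.le
      _ ≤ ((n:ℝ)+1/2) * ((2*π)^18 * Real.Gamma ((n:ℝ)+1/2)) := by
          exact mul_le_mul_of_nonneg_right hpi (by positivity)
      _ = (2*π)^18 * (((n:ℝ)+1/2) * Real.Gamma ((n:ℝ)+1/2)) := by ring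

lemma bessel_bd' (n : ℕ) (hn : 18 ≤ n) (x : ℝ) (hx : 0 < x) :
    |besselJ (n:ℝ) x| ≤ (x/(4*π))^n * ((2*π)^18 / 6402373705728000) := by
  have hπ : (0:ℝ) < π := Real.pi_pos
  have hgn : 0 < Real.Gamma ((n:ℝ)+1/2) := Real.Gamma_pos_of_pos (by positivity)
  have hsπ : (0:ℝ) < Real.sqrt π := Real.sqrt_pos.mpr hπ
  have hint : (∫ θ in (0:ℝ)..(π/2), Real.sin θ ^ (2 * (n:ℝ)) * Real.cos (x * Real.cos θ))
      = ∫ θ in (0:ℝ)..(π/2), Real.sin θ ^ (2*n) * Real.cos (x * Real.cos θ) := by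
    congr 1; funext θ
    rw [show (2 * (n:ℝ)) = ((2*n : ℕ) : ℝ) by push_cast; ring, Real.rpow_natCast]
  have hIcont : Continuous fun θ : ℝ => Real.sin θ ^ (2*n) * Real.cos (x * Real.cos θ) := by
    fun_prop
  have hIbound : |∫ θ in (0:ℝ)..(π/2), Real.sin θ ^ (2*n) * Real.cos (x * Real.cos θ)|
      ≤ (2268783825 / 34359738368 : ℝ) * π := by
    rw [← sinInt36']
    refine le_trans (intervalIntegral.abs_integral_le_integral_abs (by positivity)) ?_
    refine intervalIntegral.integral_mono_on (by positivity) ?_ ?_ ?_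
    · exact hIcont.abs.intervalIntegrable _ _
    · exact (Continuous.pow Real.continuous_sin 36).intervalIntegrable _ _
    · intro θ hθ
      obtain ⟨h0, h1⟩ := hθ
      have hs0 : 0 ≤ Real.sin θ := Real.sin_nonneg_of_nonneg_of_le_pi h0 (by linarith [hπ])
      have hs1 : Real.sin θ ≤ 1 := Real.sin_le_one θ
      rw [abs_mul]
      calc |Real.sin θ ^ (2*n)| * |Real.cos (x * Real.cos θ)|
          ≤ Real.sin θ ^ (2*n) * 1 := by
            refine mul_le_mul ?_ (Real.abs_cos_le_one _) (abs_nonneg _) (by positivity)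
            rw [abs_of_nonneg (by positivity)]
        _ ≤ Real.sin θ ^ 36 := by
            rw [mul_one]; exact pow_le_pow_of_le_one hs0 hs1 (by omega)
  unfold besselJ
  rw [hint, Real.Gamma_one_half_eq, Real.rpow_natCast, abs_mul]
  have hpre : |2 * (x/2)^n / (Real.Gamma ((n:ℝ)+1/2) * Real.sqrt π)|
      = 2 * (x/2)^n / (Real.Gamma ((n:ℝ)+1/2) * Real.sqrt π) := by
    rw [abs_of_nonneg]; positivity
  rw [hpre]
  have step1 : 2 * (x/2)^n / (Real.Gamma ((n:ℝ)+1/2) * Real.sqrt π) *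
      |∫ θ in (0:ℝ)..(π/2), Real.sin θ ^ (2*n) * Real.cos (x * Real.cos θ)|
      ≤ 2 * (x/2)^n / (Real.Gamma ((n:ℝ)+1/2) * Real.sqrt π) *
        ((2268783825 / 34359738368 : ℝ) * π) := by
    exact mul_le_mul_of_nonneg_left hIbound (by positivity)
  refine step1.trans ?_
  have hx2 : (x/2)^n = (x/(4*π))^n * (2*π)^n := by
    rw [← mul_pow]; congr 1; field_simp; ring
  rw [hx2]
  have hg18 : Real.Gamma ((18:ℝ)+1/2) = (∏ i ∈ Finset.range 18, ((i:ℝ)+1/2)) * Real.sqrt π := by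
    have := gammaHalf' 18; norm_num at this ⊢; linarith [this]
  have hP : (∏ i ∈ Finset.range 18, ((i:ℝ)+1/2)) = 221643095476699771875 / 262144 := by
    norm_num [Finset.prod_range_succ]
  have hratio : (2*π)^n / Real.Gamma ((n:ℝ)+1/2) ≤ (2*π)^18 / Real.Gamma ((18:ℝ)+1/2) := by
    rw [div_le_div_iff₀ hgn (by rw [hg18, hP]; positivity)]
    exact gamma_ratio' n hn
  have hfin : 2 * ((x/(4*π))^n * (2*π)^n) / (Real.Gamma ((n:ℝ)+1/2) * Real.sqrt π) *
      ((2268783825 / 34359738368 : ℝ) * π)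
      = (x/(4*π))^n * (((2*π)^n / Real.Gamma ((n:ℝ)+1/2)) *
        (2 * (2268783825 / 34359738368 : ℝ) * (π / Real.sqrt π))) := by
    have hss : Real.sqrt π * Real.sqrt π = π := Real.mul_self_sqrt hπ.le
    field_simp
  rw [hfin]
  have hπs : π / Real.sqrt π = Real.sqrt π := by
    rw [div_eq_iff hsπ.ne', Real.mul_self_sqrt hπ.le]
  rw [hπs]
  refine mul_le_mul_of_nonneg_left ?_ (pow_nonneg (by positivity) n)
  rw [hg18, hP] at hratio
  have hC : (0:ℝ) ≤ 2 * (2268783825 / 34359738368 : ℝ) * Real.sqrt π := by positivity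
  refine (mul_le_mul_of_nonneg_right hratio hC).trans (le_of_eq ?_)
  rw [div_mul_eq_mul_div, div_eq_div_iff (by positivity) (by norm_num)]
  have hss : Real.sqrt π * Real.sqrt π = π := Real.mul_self_sqrt hπ.le
  nlinarith [hss, sq_nonneg ((2*π)^18)]

lemma klSumT_bd' (D : ℕ) (hD : D.Prime) (m n : ℤ) (c : ℕ) :
    ‖klSumT (omegaChar D hD) m n c‖ ≤ c := by
  letI : Fact D.Prime := ⟨hD⟩
  unfold klSumT
  refine le_trans (norm_sum_le _ _) ?_
  have hbd : ∀ x ∈ Finset.filter (fun x => Nat.Coprime x c) (Finset.range c),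
      ‖omegaChar D hD ((x : ℕ) : ZMod D) * Complex.exp (2 * Real.pi * Complex.I *
        ((m : ℂ) * (x : ℂ) + (n : ℂ) * ((((x : ZMod c)⁻¹ : ZMod c).val : ℕ) : ℂ)) / (c : ℂ))‖
        ≤ 1 := by
    intro x _
    rw [norm_mul]
    have h1 : ‖omegaChar D hD ((x : ℕ) : ZMod D)‖ ≤ 1 := by
      have hq := quadraticChar_isQuadratic (ZMod D) ((x : ℕ) : ZMod D)
      have : omegaChar D hD ((x : ℕ) : ZMod D)
          = ((quadraticChar (ZMod D) ((x : ℕ) : ZMod D) : ℤ) : ℂ) := rfl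
      rw [this]
      rcases hq with h | h | h <;> rw [h] <;> norm_num
    have h2 : ‖Complex.exp (2 * Real.pi * Complex.I *
        ((m : ℂ) * (x : ℂ) + (n : ℂ) * ((((x : ZMod c)⁻¹ : ZMod c).val : ℕ) : ℂ)) / (c : ℂ))‖
        = 1 := by
      have harg : (2 * (Real.pi:ℂ) * Complex.I *
          ((m : ℂ) * (x : ℂ) + (n : ℂ) * ((((x : ZMod c)⁻¹ : ZMod c).val : ℕ) : ℂ)) / (c : ℂ))
          = ((2 * Real.pi * ((m : ℝ) * (x : ℝ) + (n : ℝ) * ((((x : ZMod c)⁻¹ : ZMod c).val : ℕ) : ℝ)) / (c : ℝ) : ℝ) : ℂ) * Complex.I := by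
        push_cast
        ring
      rw [harg]
      exact Complex.norm_exp_ofReal_mul_I _
    rw [h2, mul_one]
    exact h1
  refine le_trans (Finset.sum_le_sum hbd) ?_
  rw [Finset.sum_const, nsmul_eq_mul, mul_one]
  exact_mod_cast Nat.cast_le.mpr ((Finset.card_filter_le _ _).trans (Finset.card_range c).le)

lemma pnat_basel' : HasSum (fun j : ℕ+ => (1:ℝ) / ((j:ℕ):ℝ)^2) (π^2/6) := by
  have h := hasSum_zeta_two
  refine (Function.Injective.hasSum_iff PNat.coe_injective ?_).mpr h
  intro x hx
  have hx0 : x = 0 := by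
    by_contra h0
    exact hx ⟨⟨x, Nat.pos_of_ne_zero h0⟩, rfl⟩
  simp [hx0]

def multE (D : ℕ) (hD : 0 < D) : ℕ+ ≃ {c : ℕ // 0 < c ∧ D ∣ c} where
  toFun j := ⟨D * j, Nat.mul_pos hD j.pos, ⟨j, rfl⟩⟩
  invFun c := ⟨c.1 / D, Nat.div_pos (Nat.le_of_dvd c.2.1 c.2.2) hD⟩
  left_inv j := by
    apply Subtype.ext
    simp only [PNat.mk_coe]
    exact Nat.mul_div_cancel_left _ hD
  right_inv c := Subtype.ext (Nat.mul_div_cancel' c.2.2)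

end AuxLemmas

section MainThm
open Real
/-- For a prime `D ≥ 7` with `D ≡ 3 (mod 4)` and an odd integer `k ≥ 19`:
`|φ_k(1,1) − φ_k(D²,1)| > 0`. -/
theorem abs_phiK_sub_pos_of_19_le (D : ℕ) (hD : D.Prime) (hD7 : 7 ≤ D) (hD4 : D % 4 = 3)
    (k : ℕ) (hk : 19 ≤ k) (hkodd : Odd k) :
    0 < ‖phiK D (omegaChar D hD) k 1 1 - phiK D (omegaChar D hD) k (D ^ 2) 1‖ := by
  letI : Fact D.Prime := ⟨hD⟩
  have hπ : (0:ℝ) < π := Real.pi_pos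
  have hD0 : 0 < D := hD.pos
  have hDR : (0:ℝ) < D := by exact_mod_cast hD0
  set χ := omegaChar D hD with hχ
  set n : ℕ := k - 1 with hn
  have hn18 : 18 ≤ n := by omega
  have hkn : (k:ℝ) - 1 = ((n:ℕ):ℝ) := by
    rw [hn]; push_cast [Nat.cast_sub (by omega : 1 ≤ k)]; ring
  set K : ℝ := (2*π)^18 / 6402373705728000 with hK
  have hK0 : 0 < K := by rw [hK]; positivity
  set e := multE D hD0 with he
  have hcoe : ∀ j : ℕ+, ((e j : ℕ) : ℝ) = (D:ℝ) * ((j:ℕ):ℝ) := by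
    intro j
    have h : ((e j : ℕ)) = D * (j:ℕ) := rfl
    rw [h]; push_cast; ring
  have hjR : ∀ j : ℕ+, (0:ℝ) < ((j:ℕ):ℝ) := by
    intro j; exact_mod_cast j.pos
  -- generic per-term norm bound
  have hterm : ∀ (m₀ n₀ : ℕ) (c : {c : ℕ // 0 < c ∧ D ∣ c}),
      ‖(((c:ℕ):ℂ))⁻¹ * klSumT χ (m₀:ℤ) (n₀:ℤ) (c:ℕ) *
        ((besselJ ((k:ℝ)-1) (4 * π * Real.sqrt ((m₀:ℝ)*(n₀:ℝ)) / ((c:ℕ):ℝ)) : ℝ) : ℂ)‖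
      ≤ |besselJ ((n:ℕ):ℝ) (4 * π * Real.sqrt ((m₀:ℝ)*(n₀:ℝ)) / ((c:ℕ):ℝ))| := by
    intro m₀ n₀ c
    have hc0 : (0:ℝ) < ((c:ℕ):ℝ) := by exact_mod_cast c.2.1
    rw [norm_mul, norm_mul, hkn]
    have h1 : ‖(((c:ℕ):ℂ))⁻¹‖ = (((c:ℕ):ℝ))⁻¹ := by
      rw [norm_inv, Complex.norm_natCast]
    have h2 : ‖klSumT χ (m₀:ℤ) (n₀:ℤ) (c:ℕ)‖ ≤ ((c:ℕ):ℝ) := klSumT_bd' D hD _ _ _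
    have h3 : ‖((besselJ ((n:ℕ):ℝ) (4 * π * Real.sqrt ((m₀:ℝ)*(n₀:ℝ)) / ((c:ℕ):ℝ)) : ℝ) : ℂ)‖
        = |besselJ ((n:ℕ):ℝ) (4 * π * Real.sqrt ((m₀:ℝ)*(n₀:ℝ)) / ((c:ℕ):ℝ))| := by
      rw [Complex.norm_real, Real.norm_eq_abs]
    rw [h1, h3]
    calc (((c:ℕ):ℝ))⁻¹ * ‖klSumT χ (m₀:ℤ) (n₀:ℤ) (c:ℕ)‖ *
          |besselJ ((n:ℕ):ℝ) (4 * π * Real.sqrt ((m₀:ℝ)*(n₀:ℝ)) / ((c:ℕ):ℝ))|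
        ≤ (((c:ℕ):ℝ))⁻¹ * ((c:ℕ):ℝ) *
          |besselJ ((n:ℕ):ℝ) (4 * π * Real.sqrt ((m₀:ℝ)*(n₀:ℝ)) / ((c:ℕ):ℝ))| := by
          have := mul_le_mul_of_nonneg_left h2 (inv_nonneg.mpr hc0.le)
          exact mul_le_mul_of_nonneg_right this (abs_nonneg _)
      _ = |besselJ ((n:ℕ):ℝ) (4 * π * Real.sqrt ((m₀:ℝ)*(n₀:ℝ)) / ((c:ℕ):ℝ))| := by
          rw [inv_mul_cancel₀ hc0.ne', one_mul]
  -- T2 bound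
  have hT2 : ‖∑' c : {c : ℕ // 0 < c ∧ D ∣ c},
      (((c:ℕ):ℂ))⁻¹ * klSumT χ (((D^2 : ℕ)):ℤ) (((1:ℕ)):ℤ) (c:ℕ) *
        ((besselJ ((k:ℝ)-1) (4 * π * Real.sqrt (((D^2:ℕ):ℝ)*((1:ℕ):ℝ)) / ((c:ℕ):ℝ)) : ℝ) : ℂ)‖
      ≤ K * (π^2/6) := by
    rw [← Equiv.tsum_eq e]
    refine tsum_of_norm_bounded (pnat_basel'.mul_left K) ?_
    intro j
    refine (hterm (D^2) 1 (e j)).trans ?_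
    have harg : 4 * π * Real.sqrt (((D^2:ℕ):ℝ)*((1:ℕ):ℝ)) / ((e j : ℕ):ℝ)
        = 4 * π / ((j:ℕ):ℝ) := by
      rw [hcoe j]
      push_cast
      rw [mul_one, Real.sqrt_sq hDR.le]
      field_simp
    rw [harg]
    have hx0 : (0:ℝ) < 4 * π / ((j:ℕ):ℝ) := by positivity
    refine (bessel_bd' n hn18 _ hx0).trans ?_
    have hx1 : 4 * π / ((j:ℕ):ℝ) / (4*π) = 1/((j:ℕ):ℝ) := by
      field_simp
    rw [hx1, ← hK]
    have hle1 : (1:ℝ)/((j:ℕ):ℝ) ≤ 1 := by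
      rw [div_le_one (hjR j)]
      exact_mod_cast j.one_le
    have hpow : ((1:ℝ)/((j:ℕ):ℝ))^n ≤ ((1:ℝ)/((j:ℕ):ℝ))^2 :=
      pow_le_pow_of_le_one (by positivity) hle1 (by omega)
    calc ((1:ℝ)/((j:ℕ):ℝ))^n * K ≤ ((1:ℝ)/((j:ℕ):ℝ))^2 * K :=
          mul_le_mul_of_nonneg_right hpow hK0.le
      _ = K * (1/((j:ℕ):ℝ)^2) := by rw [div_pow, one_pow]; ring
  -- T1 bound
  have hT1 : ‖∑' c : {c : ℕ // 0 < c ∧ D ∣ c},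
      (((c:ℕ):ℂ))⁻¹ * klSumT χ (((1 : ℕ)):ℤ) (((1:ℕ)):ℤ) (c:ℕ) *
        ((besselJ ((k:ℝ)-1) (4 * π * Real.sqrt (((1:ℕ):ℝ)*((1:ℕ):ℝ)) / ((c:ℕ):ℝ)) : ℝ) : ℂ)‖
      ≤ K * (π^2/6) := by
    rw [← Equiv.tsum_eq e]
    refine tsum_of_norm_bounded (pnat_basel'.mul_left K) ?_
    intro j
    refine (hterm 1 1 (e j)).trans ?_
    have harg : 4 * π * Real.sqrt (((1:ℕ):ℝ)*((1:ℕ):ℝ)) / ((e j : ℕ):ℝ)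
        = 4 * π / ((D:ℝ) * ((j:ℕ):ℝ)) := by
      rw [hcoe j]
      push_cast
      rw [mul_one, Real.sqrt_one]
      ring
    rw [harg]
    have hx0 : (0:ℝ) < 4 * π / ((D:ℝ)*((j:ℕ):ℝ)) := by positivity
    refine (bessel_bd' n hn18 _ hx0).trans ?_
    have hx1 : 4 * π / ((D:ℝ)*((j:ℕ):ℝ)) / (4*π) = 1/((D:ℝ)*((j:ℕ):ℝ)) := by
      field_simp
    rw [hx1, ← hK]
    have hle1 : (1:ℝ)/((D:ℝ)*((j:ℕ):ℝ)) ≤ 1 := by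
      rw [div_le_one (by positivity)]
      have h1 : (1:ℝ) ≤ (D:ℝ) := by exact_mod_cast hD0
      have h2 : (1:ℝ) ≤ ((j:ℕ):ℝ) := by exact_mod_cast j.one_le
      nlinarith
    have hpow : ((1:ℝ)/((D:ℝ)*((j:ℕ):ℝ)))^n ≤ ((1:ℝ)/((D:ℝ)*((j:ℕ):ℝ)))^2 :=
      pow_le_pow_of_le_one (by positivity) hle1 (by omega)
    have hsplit : ((1:ℝ)/((D:ℝ)*((j:ℕ):ℝ)))^2 ≤ (1:ℝ)/((j:ℕ):ℝ)^2 := by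
      rw [div_pow, one_pow, mul_pow]
      refine div_le_div_of_nonneg_left (by norm_num) (by positivity) ?_
      have h1 : (1:ℝ) ≤ (D:ℝ) := by exact_mod_cast hD0
      have h2 : (1:ℝ) ≤ (D:ℝ)^2 := by nlinarith
      nlinarith [sq_nonneg ((j:ℕ):ℝ), hjR j, mul_le_mul_of_nonneg_right h2 (sq_nonneg ((j:ℕ):ℝ))]
    calc ((1:ℝ)/((D:ℝ)*((j:ℕ):ℝ)))^n * K ≤ ((1:ℝ)/((D:ℝ)*((j:ℕ):ℝ)))^2 * K :=
          mul_le_mul_of_nonneg_right hpow hK0.le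
      _ ≤ ((1:ℝ)/((j:ℕ):ℝ)^2) * K := mul_le_mul_of_nonneg_right hsplit hK0.le
      _ = K * (1/((j:ℕ):ℝ)^2) := by ring
  -- assemble
  have hD2 : ¬ (D^2 = 1) := by nlinarith
  set T₁ : ℂ := ∑' c : {c : ℕ // 0 < c ∧ D ∣ c},
      (((c:ℕ):ℂ))⁻¹ * klSumT χ (((1:ℕ)):ℤ) (((1:ℕ)):ℤ) (c:ℕ) *
        ((besselJ ((k:ℝ)-1) (4 * π * Real.sqrt (((1:ℕ):ℝ)*((1:ℕ):ℝ)) / ((c:ℕ):ℝ)) : ℝ) : ℂ) with hT1d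
  set T₂ : ℂ := ∑' c : {c : ℕ // 0 < c ∧ D ∣ c},
      (((c:ℕ):ℂ))⁻¹ * klSumT χ (((D^2:ℕ)):ℤ) (((1:ℕ)):ℤ) (c:ℕ) *
        ((besselJ ((k:ℝ)-1) (4 * π * Real.sqrt (((D^2:ℕ):ℝ)*((1:ℕ):ℝ)) / ((c:ℕ):ℝ)) : ℝ) : ℂ) with hT2d
  have hsplit : phiK D χ k 1 1 - phiK D χ k (D ^ 2) 1
      = 1 + (2 * π * Complex.I ^ k * T₁ - 2 * π * Complex.I ^ k * T₂) := by
    rw [phiK, phiK, if_pos rfl, if_neg hD2, hT1d, hT2d]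
    push_cast
    ring
  rw [hsplit]
  have hw : ‖2 * (π:ℂ) * Complex.I ^ k * T₁ - 2 * π * Complex.I ^ k * T₂‖
      ≤ 2 * π * (K * (π^2/6)) + 2 * π * (K * (π^2/6)) := by
    refine (norm_sub_le _ _).trans ?_
    have hP : ‖(2 : ℂ) * (π:ℂ) * Complex.I ^ k‖ = 2 * π := by
      rw [norm_mul, norm_mul, norm_pow, Complex.norm_I, one_pow, mul_one,
        Complex.norm_real, Real.norm_eq_abs, abs_of_pos hπ]
      norm_num
    gcongr
    · calc ‖(2:ℂ) * π * Complex.I ^ k * T₁‖ = 2 * π * ‖T₁‖ := by rw [norm_mul, hP]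
        _ ≤ 2 * π * (K * (π^2/6)) := by
            exact mul_le_mul_of_nonneg_left hT1 (by positivity)
    · calc ‖(2:ℂ) * π * Complex.I ^ k * T₂‖ = 2 * π * ‖T₂‖ := by rw [norm_mul, hP]
        _ ≤ 2 * π * (K * (π^2/6)) := by
            exact mul_le_mul_of_nonneg_left hT2 (by positivity)
  have hnum : 2 * π * (K * (π^2/6)) + 2 * π * (K * (π^2/6)) < 1 := by
    have heq : 2 * π * (K * (π^2/6)) + 2 * π * (K * (π^2/6))
        = π^21 * (2^19 / (3 * 6402373705728000)) := by
      rw [hK]; ring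
    rw [heq]
    have h21 : π^21 ≤ 3.15^21 := pow_le_pow_left₀ hπ.le Real.pi_lt_d2.le 21
    calc π^21 * (2^19 / (3 * 6402373705728000))
        ≤ 3.15^21 * (2^19 / (3 * 6402373705728000)) := by
          exact mul_le_mul_of_nonneg_right h21 (by positivity)
      _ < 1 := by norm_num
  set w : ℂ := 2 * (π:ℂ) * Complex.I ^ k * T₁ - 2 * π * Complex.I ^ k * T₂ with hwd
  have h1w : (1:ℝ) ≤ ‖(1 + w : ℂ)‖ + ‖w‖ := by
    calc (1:ℝ) = ‖(1 + w) + (-w)‖ := by norm_num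
      _ ≤ ‖(1+w : ℂ)‖ + ‖(-w : ℂ)‖ := norm_add_le _ _
      _ = ‖(1+w : ℂ)‖ + ‖w‖ := by rw [norm_neg]
  have : ‖(1 + w : ℂ)‖ ≥ 1 - ‖w‖ := by linarith
  have hlt : ‖w‖ < 1 := lt_of_le_of_lt hw hnum
  linarith

end MainThm
end

section
/- For every integer k ≥ 3 and every positive integer D, one has Ψ_k^1(D) ≤ (2π)^k · √π · ζ(k − 1/2)² / (√D · Γ(k − 1/2)), where ζ is the Riemann zeta function and Γ is the Gamma function. -/
lemma besselJ_abs_le {ν x : ℝ} (hν : 0 ≤ ν) (hx : 0 < x) :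
    |besselJ ν x| ≤ Real.sqrt Real.pi * (x / 2) ^ ν / Real.Gamma (ν + 1 / 2) := by
  have hΓ : 0 < Real.Gamma (ν + 1 / 2) := Real.Gamma_pos_of_pos (by linarith)
  have hsπ : 0 < Real.sqrt Real.pi := Real.sqrt_pos.mpr Real.pi_pos
  have hxν : (0:ℝ) ≤ (x / 2) ^ ν := Real.rpow_nonneg (by linarith) _
  have hI : |∫ θ in (0:ℝ)..(Real.pi / 2), Real.sin θ ^ (2 * ν) * Real.cos (x * Real.cos θ)|
      ≤ Real.pi / 2 := by
    have h := intervalIntegral.norm_integral_le_of_norm_le_const (C := 1) (a := (0:ℝ))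
      (b := Real.pi / 2)
      (f := fun θ => Real.sin θ ^ (2 * ν) * Real.cos (x * Real.cos θ)) ?_
    · have hπ2 : (0:ℝ) ≤ Real.pi / 2 := by positivity
      simpa [abs_of_nonneg hπ2] using h
    · intro θ hθ
      rw [Set.uIoc_of_le (by positivity)] at hθ
      have hθπ : θ ≤ Real.pi := le_trans hθ.2 (by linarith [Real.pi_pos])
      have h1 : 0 ≤ Real.sin θ := Real.sin_nonneg_of_nonneg_of_le_pi hθ.1.le hθπ
      have h2 : Real.sin θ ^ (2 * ν) ≤ 1 :=
        Real.rpow_le_one h1 (Real.sin_le_one θ) (by linarith)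
      have h2' : 0 ≤ Real.sin θ ^ (2 * ν) := Real.rpow_nonneg h1 _
      have h3 : |Real.cos (x * Real.cos θ)| ≤ 1 := Real.abs_cos_le_one _
      calc ‖Real.sin θ ^ (2 * ν) * Real.cos (x * Real.cos θ)‖
          = Real.sin θ ^ (2 * ν) * |Real.cos (x * Real.cos θ)| := by
            rw [Real.norm_eq_abs, abs_mul, abs_of_nonneg h2']
        _ ≤ 1 * 1 := by
            apply mul_le_mul h2 h3 (abs_nonneg _) zero_le_one
        _ = 1 := one_mul 1
  have hA : (0:ℝ) ≤ 2 * (x / 2) ^ ν / (Real.Gamma (ν + 1 / 2) * Real.Gamma (1 / 2)) := by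
    rw [Real.Gamma_one_half_eq]; positivity
  calc |besselJ ν x|
      = (2 * (x / 2) ^ ν / (Real.Gamma (ν + 1 / 2) * Real.Gamma (1 / 2))) *
        |∫ θ in (0:ℝ)..(Real.pi / 2), Real.sin θ ^ (2 * ν) * Real.cos (x * Real.cos θ)| := by
        rw [besselJ, abs_mul, abs_of_nonneg hA]
    _ ≤ (2 * (x / 2) ^ ν / (Real.Gamma (ν + 1 / 2) * Real.Gamma (1 / 2))) * (Real.pi / 2) := by
        exact mul_le_mul_of_nonneg_left hI hA
    _ = Real.sqrt Real.pi * (x / 2) ^ ν / Real.Gamma (ν + 1 / 2) := by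
        rw [Real.Gamma_one_half_eq]
        have hπ : Real.sqrt Real.pi * Real.sqrt Real.pi = Real.pi :=
          Real.mul_self_sqrt Real.pi_pos.le
        field_simp
        linear_combination (-1 : ℝ) * hπ
lemma zetaR_eq (s : ℝ) (hs : 1 < s) : zetaR s = ∑' n : ℕ, (n : ℝ) ^ (-s) := by
  have hu : Summable (fun n : ℕ => (n : ℝ) ^ (-s)) :=
    Real.summable_nat_rpow.mpr (by linarith)
  have hterm : ∀ n : ℕ, 1 / ((n : ℂ)) ^ (s : ℂ) = (((n : ℝ) ^ (-s) : ℝ) : ℂ) := by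
    intro n
    rw [Real.rpow_neg (Nat.cast_nonneg n), Complex.ofReal_inv,
      Complex.ofReal_cpow (Nat.cast_nonneg n), one_div, Complex.ofReal_natCast]
  have h1 : riemannZeta (s : ℂ) = ∑' n : ℕ, (((n : ℝ) ^ (-s) : ℝ) : ℂ) := by
    rw [zeta_eq_tsum_one_div_nat_cpow (by simpa using hs)]
    exact tsum_congr hterm
  rw [zetaR, h1, Complex.re_tsum (Complex.summable_ofReal.mpr hu)]
  simp
noncomputable def divEquiv : (Σ n : ℕ, {p : ℕ × ℕ // p ∈ n.divisorsAntidiagonal}) ≃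
    {p : ℕ × ℕ // p.1 * p.2 ≠ 0} :=
  { toFun := fun x => ⟨x.2.1, by
      have hx := Nat.mem_divisorsAntidiagonal.mp x.2.2
      simpa [hx.1] using hx.2⟩
    invFun := fun p => ⟨p.1.1 * p.1.2, ⟨p.1, Nat.mem_divisorsAntidiagonal.mpr ⟨rfl, p.2⟩⟩⟩
    left_inv := fun x => by
      obtain ⟨n, p, hp⟩ := x
      obtain ⟨h1, _⟩ := Nat.mem_divisorsAntidiagonal.mp hp
      subst h1
      rfl
    right_inv := fun p => rfl }
lemma tsum_sigma0 (s : ℝ) (hs : 1 < s) :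
    ∑' n : ℕ, ((n.divisors.card : ℝ) * (n : ℝ) ^ (-s)) = (∑' n : ℕ, (n : ℝ) ^ (-s)) ^ 2 := by
  set u : ℕ → ℝ := fun n => (n : ℝ) ^ (-s) with hu_def
  have hu : Summable u := Real.summable_nat_rpow.mpr (by linarith)
  have hu0 : u 0 = 0 := by simp [hu_def, Real.zero_rpow (by linarith : -s ≠ 0)]
  have hunn : ∀ n, 0 ≤ u n := fun n => Real.rpow_nonneg (Nat.cast_nonneg n) _
  have hun : Summable (fun n => ‖u n‖) := by
    simpa [Real.norm_eq_abs, abs_of_nonneg (hunn _)] using hu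
  set h : ℕ × ℕ → ℝ := fun p => u p.1 * u p.2 with hh_def
  have hh : Summable h := summable_mul_of_summable_norm hun hun
  set S : Set (ℕ × ℕ) := {p | p.1 * p.2 ≠ 0} with hS_def
  have hsupp : Function.support h ⊆ S := by
    intro p hp
    simp only [hS_def, Set.mem_setOf_eq]
    intro hc
    rcases Nat.mul_eq_zero.mp hc with h0 | h0 <;>
      exact hp (by simp [hh_def, h0, hu0])
  -- equivalence
  have hsub : Summable (fun p : S => h ↑p) := hh.subtype S
  have hsig : Summable (fun x : Σ n : ℕ, {p : ℕ × ℕ // p ∈ n.divisorsAntidiagonal} =>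
      h ↑((divEquiv x) : S)) := (divEquiv.summable_iff.mpr hsub)
  calc ∑' n : ℕ, ((n.divisors.card : ℝ) * u n)
      = ∑' n : ℕ, ∑ p ∈ n.divisorsAntidiagonal, h p := by
        apply tsum_congr; intro n
        have hcard : n.divisorsAntidiagonal.card = n.divisors.card := by
          rw [← Nat.map_div_right_divisors, Finset.card_map]
        have hconst : ∀ p ∈ n.divisorsAntidiagonal, h p = u n := by
          intro p hp
          obtain ⟨h1, h2⟩ := Nat.mem_divisorsAntidiagonal.mp hp
          have hp1 : (0:ℝ) ≤ (p.1 : ℝ) := Nat.cast_nonneg _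
          have hp2 : (0:ℝ) ≤ (p.2 : ℝ) := Nat.cast_nonneg _
          simp only [hh_def, hu_def]
          rw [← Real.mul_rpow hp1 hp2, ← Nat.cast_mul, h1]
        rw [Finset.sum_congr rfl hconst, Finset.sum_const, hcard, nsmul_eq_mul]
    _ = ∑' n : ℕ, ∑' p : {p : ℕ × ℕ // p ∈ n.divisorsAntidiagonal}, h ↑p := by
        apply tsum_congr; intro n
        rw [Finset.tsum_subtype]
    _ = ∑' x : Σ n : ℕ, {p : ℕ × ℕ // p ∈ n.divisorsAntidiagonal}, h ↑((divEquiv x) : S) := by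
        rw [Summable.tsum_sigma hsig]
        exact tsum_congr fun b => tsum_congr fun c => rfl
    _ = ∑' p : S, h ↑p := divEquiv.tsum_eq (fun p : S => h ↑p)
    _ = ∑' p : ℕ × ℕ, h p := tsum_subtype_eq_of_support_subset hsupp
    _ = (∑' n : ℕ, u n) ^ 2 := by
        rw [sq, tsum_mul_tsum_of_summable_norm hun hun]
lemma card_divisors_le (n : ℕ) : ((n.divisors.card : ℝ)) ≤ n := by
  have hsub : n.divisors ⊆ Finset.Icc 1 n := by
    intro d hd
    rw [Nat.mem_divisors] at hd
    refine Finset.mem_Icc.mpr ⟨?_, Nat.le_of_dvd (Nat.pos_of_ne_zero hd.2) hd.1⟩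
    rcases Nat.eq_zero_or_pos d with rfl | h
    · exact absurd (Nat.eq_zero_of_zero_dvd hd.1) hd.2
    · exact h
  calc ((n.divisors.card : ℝ)) ≤ ((Finset.Icc 1 n).card : ℝ) := by
        exact_mod_cast Finset.card_le_card hsub
    _ = n := by rw [Nat.card_Icc]; simp
lemma summable_g {s : ℝ} (hs : 2 < s) :
    Summable (fun n : ℕ => (n.divisors.card : ℝ) * (n : ℝ) ^ (-s)) := by
  have h1 : Summable (fun n : ℕ => (n : ℝ) ^ (1 - s)) :=
    Real.summable_nat_rpow.mpr (by linarith)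
  apply Summable.of_nonneg_of_le (fun n => by positivity) _ h1
  intro n
  rcases Nat.eq_zero_or_pos n with rfl | hn
  · simp [Real.zero_rpow (by linarith : (1:ℝ) - s ≠ 0)]
  · have hn' : (0:ℝ) < n := by exact_mod_cast hn
    calc (n.divisors.card : ℝ) * (n : ℝ) ^ (-s)
        ≤ (n : ℝ) * (n : ℝ) ^ (-s) := by
          apply mul_le_mul_of_nonneg_right (card_divisors_le n) (by positivity)
      _ = (n : ℝ) ^ (1 - s) := by
          rw [sub_eq_add_neg, Real.rpow_add hn', Real.rpow_one]

/-- For every integer `k ≥ 3` and positive integer `D`: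
`Ψ_k^1(D) ≤ (2π)^k √π ζ(k−1/2)² / (√D Γ(k−1/2))`. -/
theorem Psi1_le (k D : ℕ) (hk : 3 ≤ k) (hD : 0 < D) :
    Psi1 k D ≤ (2 * Real.pi) ^ k * Real.sqrt Real.pi * zetaR ((k : ℝ) - 1 / 2) ^ 2 /
      (Real.sqrt D * Real.Gamma ((k : ℝ) - 1 / 2)) := by
  have hk3 : (3:ℝ) ≤ (k:ℝ) := by exact_mod_cast hk
  set s : ℝ := (k : ℝ) - 1 / 2 with hs_def
  have hs1 : 1 < s := by rw [hs_def]; linarith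
  have hs2 : 2 < s := by rw [hs_def]; linarith
  have hΓ : 0 < Real.Gamma s := Real.Gamma_pos_of_pos (by linarith)
  have hπ : 0 < Real.pi := Real.pi_pos
  set C : ℝ := Real.sqrt Real.pi * (2 * Real.pi) ^ ((k:ℝ) - 1) / Real.Gamma s with hC_def
  have hC : 0 ≤ C := by positivity
  set g : ℕ → ℝ := fun n => (n.divisors.card : ℝ) * (n : ℝ) ^ (-s) with hg_def
  have hgnn : ∀ n, 0 ≤ g n := fun n => by positivity
  have hgsum : Summable g := summable_g hs2
  set T := {ℓ : ℕ // 0 < ℓ ∧ ¬ D ∣ ℓ}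
  set f : T → ℝ := fun ℓ =>
    ((ℓ : ℕ) : ℝ) ^ (-(1 / 2) : ℝ) * ((ℓ : ℕ).divisors.card : ℝ) *
      |besselJ ((k : ℝ) - 1) (4 * Real.pi / ((ℓ : ℕ) : ℝ))| with hf_def
  have key : ∀ ℓ : T, f ℓ ≤ C * g (ℓ : ℕ) := by
    intro ℓ
    have hL : (0:ℝ) < ((ℓ : ℕ) : ℝ) := by exact_mod_cast ℓ.2.1
    have hJ : |besselJ ((k : ℝ) - 1) (4 * Real.pi / ((ℓ : ℕ) : ℝ))|
        ≤ C * ((ℓ : ℕ) : ℝ) ^ (-((k:ℝ) - 1)) := by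
      have hb := besselJ_abs_le (ν := (k:ℝ) - 1) (x := 4 * Real.pi / ((ℓ : ℕ) : ℝ))
        (by linarith) (by positivity)
      have harg : (4 * Real.pi / ((ℓ : ℕ) : ℝ)) / 2 = 2 * Real.pi / ((ℓ : ℕ) : ℝ) := by
        ring
      have hpow : ((2 * Real.pi / ((ℓ : ℕ) : ℝ)) : ℝ) ^ ((k:ℝ) - 1)
          = (2 * Real.pi) ^ ((k:ℝ) - 1) * ((ℓ : ℕ) : ℝ) ^ (-((k:ℝ) - 1)) := by
        rw [Real.div_rpow (by positivity) hL.le, Real.rpow_neg hL.le, div_eq_mul_inv]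
      have hΓν : ((k:ℝ) - 1) + 1/2 = s := by rw [hs_def]; ring
      calc |besselJ ((k : ℝ) - 1) (4 * Real.pi / ((ℓ : ℕ) : ℝ))|
          ≤ Real.sqrt Real.pi * ((4 * Real.pi / ((ℓ : ℕ) : ℝ)) / 2) ^ ((k:ℝ) - 1) /
              Real.Gamma (((k:ℝ) - 1) + 1/2) := hb
        _ = C * ((ℓ : ℕ) : ℝ) ^ (-((k:ℝ) - 1)) := by
            rw [harg, hpow, hΓν, hC_def]; ring
    calc f ℓ ≤ ((ℓ : ℕ) : ℝ) ^ (-(1 / 2) : ℝ) * ((ℓ : ℕ).divisors.card : ℝ) *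
          (C * ((ℓ : ℕ) : ℝ) ^ (-((k:ℝ) - 1))) := by
          apply mul_le_mul_of_nonneg_left hJ (by positivity)
      _ = C * g (ℓ : ℕ) := by
          rw [hg_def]
          have : ((ℓ : ℕ) : ℝ) ^ (-(1 / 2) : ℝ) * ((ℓ : ℕ) : ℝ) ^ (-((k:ℝ) - 1))
              = ((ℓ : ℕ) : ℝ) ^ (-s) := by
            rw [← Real.rpow_add hL, hs_def]; ring_nf
          calc ((ℓ : ℕ) : ℝ) ^ (-(1 / 2) : ℝ) * ((ℓ : ℕ).divisors.card : ℝ) *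
              (C * ((ℓ : ℕ) : ℝ) ^ (-((k:ℝ) - 1)))
              = C * (((ℓ : ℕ).divisors.card : ℝ) *
                (((ℓ : ℕ) : ℝ) ^ (-(1 / 2) : ℝ) * ((ℓ : ℕ) : ℝ) ^ (-((k:ℝ) - 1)))) := by ring
            _ = C * (((ℓ : ℕ).divisors.card : ℝ) * ((ℓ : ℕ) : ℝ) ^ (-s)) := by rw [this]
  have hCg : Summable (fun ℓ : T => C * g (ℓ : ℕ)) :=
    ((hgsum.mul_left C).subtype _)
  have hfsum : Summable f :=
    Summable.of_nonneg_of_le (fun ℓ => by rw [hf_def]; positivity) key hCg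
  have hT : (∑' ℓ : T, f ℓ) ≤ C * zetaR s ^ 2 := by
    calc (∑' ℓ : T, f ℓ) ≤ ∑' ℓ : T, C * g (ℓ : ℕ) := Summable.tsum_le_tsum key hfsum hCg
      _ = C * ∑' ℓ : T, g (ℓ : ℕ) := tsum_mul_left
      _ ≤ C * ∑' n : ℕ, g n := by
          apply mul_le_mul_of_nonneg_left _ hC
          exact Summable.tsum_subtype_le g _ hgnn hgsum
      _ = C * zetaR s ^ 2 := by
          rw [hg_def, tsum_sigma0 s hs1, ← zetaR_eq s hs1]
  have hD' : (0:ℝ) < Real.sqrt D := Real.sqrt_pos.mpr (by exact_mod_cast hD)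
  have hDrw : ((D : ℝ)) ^ (-(1 / 2) : ℝ) = (Real.sqrt D)⁻¹ := by
    rw [Real.rpow_neg (Nat.cast_nonneg D), Real.sqrt_eq_rpow]
  have hpk : 2 * Real.pi * (2 * Real.pi) ^ ((k:ℝ) - 1) = (2 * Real.pi) ^ k := by
    have h1 : (2 * Real.pi) ^ ((k:ℝ)) = (2 * Real.pi) ^ ((k:ℝ) - 1) * (2 * Real.pi) := by
      rw [← Real.rpow_add_one (by positivity : (2 * Real.pi) ≠ 0) ((k:ℝ) - 1)]
      congr 1
      ring
    rw [← Real.rpow_natCast (2 * Real.pi) k, h1]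
    ring
  calc Psi1 k D = 2 * Real.pi * ((D : ℝ)) ^ (-(1 / 2) : ℝ) * ∑' ℓ : T, f ℓ := rfl
    _ ≤ 2 * Real.pi * ((D : ℝ)) ^ (-(1 / 2) : ℝ) * (C * zetaR s ^ 2) := by
        apply mul_le_mul_of_nonneg_left hT (by positivity)
    _ = (2 * Real.pi) ^ k * Real.sqrt Real.pi * zetaR s ^ 2 /
        (Real.sqrt D * Real.Gamma s) := by
        rw [hDrw, hC_def]
        field_simp
        rw [← hpk]
        ring
end

section
/- For every integer k ≥ 5 and every prime D ≥ 11, one has Ψ_k^2(D) < 0.25. -/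
open Real in
lemma aux_integral_sin_step (n : ℕ) :
    ∫ θ in (0:ℝ)..(π/2), Real.sin θ ^ (n + 2) =
      ((n:ℝ)+1)/((n:ℝ)+2) * ∫ θ in (0:ℝ)..(π/2), Real.sin θ ^ n := by
  rw [integral_sin_pow]
  simp [Real.cos_pi_div_two]

open Real in
lemma aux_integral_sin_pow_eight :
    ∫ θ in (0:ℝ)..(π/2), Real.sin θ ^ 8 = 35 * π / 256 := by
  have h0 : ∫ θ in (0:ℝ)..(π/2), Real.sin θ ^ 0 = π / 2 := by
    simp
  rw [show (8:ℕ) = 6 + 2 from rfl, aux_integral_sin_step,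
    show (6:ℕ) = 4 + 2 from rfl, aux_integral_sin_step,
    show (4:ℕ) = 2 + 2 from rfl, aux_integral_sin_step,
    show (2:ℕ) = 0 + 2 from rfl, aux_integral_sin_step, h0]
  norm_num
  ring

open Real in
lemma aux_Gamma_nine_halves : Real.Gamma (9/2 : ℝ) = 105/16 * Real.sqrt π := by
  have h12 : Real.Gamma (1/2 : ℝ) = Real.sqrt π := Real.Gamma_one_half_eq
  have h32 : Real.Gamma (3/2 : ℝ) = 1/2 * Real.sqrt π := by
    rw [show (3/2:ℝ) = 1/2 + 1 by norm_num, Real.Gamma_add_one (by norm_num), h12]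
  have h52 : Real.Gamma (5/2 : ℝ) = 3/4 * Real.sqrt π := by
    rw [show (5/2:ℝ) = 3/2 + 1 by norm_num, Real.Gamma_add_one (by norm_num), h32]; ring
  have h72 : Real.Gamma (7/2 : ℝ) = 15/8 * Real.sqrt π := by
    rw [show (7/2:ℝ) = 5/2 + 1 by norm_num, Real.Gamma_add_one (by norm_num), h52]; ring
  rw [show (9/2:ℝ) = 7/2 + 1 by norm_num, Real.Gamma_add_one (by norm_num), h72]; ring

open Real in
lemma aux_Gamma_ge (k : ℕ) (hk : 5 ≤ k) :
    105/16 * Real.sqrt π ≤ Real.Gamma ((k:ℝ) - 1 + 1/2) := by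
  induction k, hk using Nat.le_induction with
  | base =>
    rw [show ((5:ℕ):ℝ) - 1 + 1/2 = 9/2 by norm_num, aux_Gamma_nine_halves]
  | succ n hn ih =>
    have hn5 : (5:ℝ) ≤ (n:ℝ) := by exact_mod_cast hn
    have hpos : (0:ℝ) < (n:ℝ) - 1 + 1/2 := by linarith
    have heq : ((n+1:ℕ):ℝ) - 1 + 1/2 = ((n:ℝ) - 1 + 1/2) + 1 := by push_cast; ring
    rw [heq, Real.Gamma_add_one (ne_of_gt hpos)]
    have h1 : (1:ℝ) ≤ (n:ℝ) - 1 + 1/2 := by linarith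
    nlinarith [Real.Gamma_pos_of_pos hpos, ih]

open Real in
lemma aux_besselJ_le (k : ℕ) (hk : 5 ≤ k) {x : ℝ} (hx : 0 < x) (hx2 : x ≤ 2) :
    |besselJ ((k:ℝ) - 1) x| ≤ (x/2)^4 / 24 := by
  have hk5 : (5:ℝ) ≤ (k:ℝ) := by exact_mod_cast hk
  have hν4 : (4:ℝ) ≤ (k:ℝ) - 1 := by linarith
  have hΓpos : 0 < Real.Gamma ((k:ℝ) - 1 + 1/2) := Real.Gamma_pos_of_pos (by linarith)
  have hsπ : 0 < Real.sqrt π := Real.sqrt_pos.mpr Real.pi_pos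
  have hx20 : 0 < x/2 := by linarith
  have hx21 : x/2 ≤ 1 := by linarith
  -- bound the integral
  have hI : |∫ θ in (0:ℝ)..(π/2), Real.sin θ ^ (2*((k:ℝ)-1)) * Real.cos (x * Real.cos θ)|
      ≤ 35 * π / 256 := by
    have hb : ∀ᵐ t ∂(MeasureTheory.volume.restrict (Set.uIoc (0:ℝ) (π/2))),
        ‖Real.sin t ^ (2*((k:ℝ)-1)) * Real.cos (x * Real.cos t)‖ ≤ Real.sin t ^ 8 := by
      refine MeasureTheory.ae_restrict_of_forall_mem measurableSet_uIoc ?_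
      intro t ht
      rw [Set.uIoc_of_le (by positivity)] at ht
      have hπ2 : π/2 < π := by linarith [Real.pi_pos]
      have hs0 : 0 < Real.sin t := Real.sin_pos_of_pos_of_lt_pi ht.1 (lt_of_le_of_lt ht.2 hπ2)
      have hs1 : Real.sin t ≤ 1 := Real.sin_le_one t
      have h2 : Real.sin t ^ (2*((k:ℝ)-1)) ≤ Real.sin t ^ ((8:ℕ):ℝ) := by
        apply Real.rpow_le_rpow_of_exponent_ge hs0 hs1
        push_cast; linarith
      rw [Real.rpow_natCast] at h2
      calc ‖Real.sin t ^ (2*((k:ℝ)-1)) * Real.cos (x * Real.cos t)‖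
          = |Real.sin t ^ (2*((k:ℝ)-1))| * |Real.cos (x * Real.cos t)| := by
            rw [norm_mul, Real.norm_eq_abs, Real.norm_eq_abs]
        _ ≤ Real.sin t ^ (2*((k:ℝ)-1)) * 1 := by
            rw [abs_of_nonneg (Real.rpow_nonneg hs0.le _)]
            exact mul_le_mul_of_nonneg_left (Real.abs_cos_le_one _)
              (Real.rpow_nonneg hs0.le _)
        _ = Real.sin t ^ (2*((k:ℝ)-1)) := mul_one _
        _ ≤ Real.sin t ^ 8 := h2
    have hg : IntervalIntegrable (fun t => Real.sin t ^ 8) MeasureTheory.volume 0 (π/2) :=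
      (Real.continuous_sin.pow 8).intervalIntegrable _ _
    have := intervalIntegral.norm_integral_le_abs_of_norm_le hb hg
    rw [aux_integral_sin_pow_eight] at this
    simpa [abs_of_nonneg (by positivity : (0:ℝ) ≤ 35 * π / 256)] using this
  -- assemble
  have hCpos : 0 < 2 * (x/2) ^ ((k:ℝ)-1) /
      (Real.Gamma ((k:ℝ)-1 + 1/2) * Real.Gamma (1/2)) := by
    apply div_pos
    · positivity
    · exact mul_pos hΓpos (Real.Gamma_pos_of_pos (by norm_num))
  have hbJ : |besselJ ((k:ℝ) - 1) x| = 2 * (x/2) ^ ((k:ℝ)-1) /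
      (Real.Gamma ((k:ℝ)-1 + 1/2) * Real.Gamma (1/2)) *
      |∫ θ in (0:ℝ)..(π/2), Real.sin θ ^ (2*((k:ℝ)-1)) * Real.cos (x * Real.cos θ)| := by
    rw [besselJ, abs_mul, abs_of_nonneg hCpos.le]
  rw [hbJ, Real.Gamma_one_half_eq]
  have hpow : (x/2) ^ ((k:ℝ)-1) ≤ (x/2)^(4:ℕ) := by
    rw [← Real.rpow_natCast (x/2) 4]
    apply Real.rpow_le_rpow_of_exponent_ge hx20 hx21
    push_cast; linarith
  have hfrac : 2 * (x/2) ^ ((k:ℝ)-1) / (Real.Gamma ((k:ℝ)-1 + 1/2) * Real.sqrt π)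
      ≤ 2 * (x/2) ^ (4:ℕ) / ((105/16 * Real.sqrt π) * Real.sqrt π) := by
    apply div_le_div₀ (by positivity) (by linarith [hpow]) (mul_pos (by positivity) hsπ)
    exact mul_le_mul_of_nonneg_right (aux_Gamma_ge k hk) hsπ.le
  calc 2 * (x/2) ^ ((k:ℝ)-1) / (Real.Gamma ((k:ℝ)-1 + 1/2) * Real.sqrt π) *
        |∫ θ in (0:ℝ)..(π/2), Real.sin θ ^ (2*((k:ℝ)-1)) * Real.cos (x * Real.cos θ)|
      ≤ 2 * (x/2) ^ (4:ℕ) / ((105/16 * Real.sqrt π) * Real.sqrt π) * (35 * π / 256) :=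
        mul_le_mul hfrac hI (abs_nonneg _) (by positivity)
    _ = (x/2)^4 / 24 := by
        have hππ : Real.sqrt π * Real.sqrt π = π := Real.mul_self_sqrt Real.pi_pos.le
        rw [mul_assoc, hππ]
        have hπ0 : π ≠ 0 := Real.pi_pos.ne'
        field_simp
        ring

lemma aux_card_divisors_le_self (m : ℕ) : m.divisors.card ≤ m := by
  classical
  have hsub : m.divisors ⊆ Finset.Ico 1 (m+1) := by
    intro d hd
    rw [Nat.mem_divisors] at hd
    rw [Finset.mem_Ico]
    constructor
    · exact Nat.pos_of_dvd_of_pos hd.1 (Nat.pos_of_ne_zero hd.2)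
    · exact Nat.lt_succ_of_le (Nat.le_of_dvd (Nat.pos_of_ne_zero hd.2) hd.1)
  calc m.divisors.card ≤ (Finset.Ico 1 (m+1)).card := Finset.card_le_card hsub
    _ = m := by rw [Nat.card_Ico]; omega

lemma aux_card_divisors_prime_pow_mul {p : ℕ} (hp : p.Prime) (e m : ℕ) (hm : m ≠ 0) :
    (p ^ e * m).divisors.card ≤ (e + 1) * m.divisors.card := by
  have hsplit : p ^ (m.factorization p) * (m / p ^ (m.factorization p)) = m :=
    Nat.ordProj_mul_ordCompl_eq_self m p
  set a := m.factorization p with ha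
  set m' := m / p ^ a with hm'def
  have hnd : ¬ p ∣ m' := Nat.not_dvd_ordCompl hp hm
  have hcop : Nat.Coprime p m' := (Nat.Prime.coprime_iff_not_dvd hp).mpr hnd
  have hm'0 : m' ≠ 0 := by
    intro h
    rw [h, mul_zero] at hsplit
    exact hm hsplit.symm
  have h1 : p ^ e * m = p ^ (e + a) * m' := by
    rw [← hsplit]; ring
  have hcard : ∀ b : ℕ, (p ^ b).divisors.card = b + 1 := by
    intro b
    rw [Nat.divisors_prime_pow hp, Finset.card_map, Finset.card_range]
  rw [h1, (hcop.pow_left _).card_divisors_mul, ← hsplit,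
    (hcop.pow_left _).card_divisors_mul, hcard, hcard]
  have : e + a + 1 ≤ (e + 1) * (a + 1) := by nlinarith
  calc (e + a + 1) * m'.divisors.card ≤ ((e+1)*(a+1)) * m'.divisors.card :=
        Nat.mul_le_mul_right _ this
    _ = (e + 1) * ((a + 1) * m'.divisors.card) := by ring

set_option maxHeartbeats 1000000 in
open Real in
lemma aux_term_le (k D : ℕ) (hk : 5 ≤ k) (hD : D.Prime) (hD11 : 11 ≤ D) (m : ℕ+) :
    ((D : ℝ) * (m : ℕ)) ^ (-(1 / 2) : ℝ) *
        (Real.sqrt D * (((D * (m : ℕ)).divisors.card : ℝ)) + ((D ^ 2 * (m : ℕ)).divisors.card : ℝ)) *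
        |besselJ ((k : ℝ) - 1) (4 * Real.pi / ((D : ℝ) * (m : ℕ)))|
      ≤ 2 * π^4 / (D:ℝ)^4 * ((((m:ℕ):ℝ))^2)⁻¹ := by
  have hm0 : (m:ℕ) ≠ 0 := m.pos.ne'
  have hM1 : (1:ℝ) ≤ ((m:ℕ):ℝ) := by exact_mod_cast m.pos
  have hM0 : (0:ℝ) < ((m:ℕ):ℝ) := by linarith
  have hD11' : (11:ℝ) ≤ (D:ℝ) := by exact_mod_cast hD11
  have hD0 : (0:ℝ) < (D:ℝ) := by linarith
  set M : ℝ := ((m:ℕ):ℝ) with hMdef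
  have hy0 : (0:ℝ) < (D:ℝ) * M := by positivity
  have hπ : π < 3.15 := Real.pi_lt_d2
  have hπ0 : 0 < π := Real.pi_pos
  have hy11 : (11:ℝ) ≤ (D:ℝ) * M := by nlinarith
  -- Bessel bound
  have hxpos : 0 < 4 * π / ((D:ℝ) * M) := by positivity
  have hxle : 4 * π / ((D:ℝ) * M) ≤ 2 := by
    rw [div_le_iff₀ hy0]; nlinarith
  have hJ : |besselJ ((k:ℝ) - 1) (4 * π / ((D:ℝ) * M))|
      ≤ (4 * π / ((D:ℝ) * M) / 2) ^ 4 / 24 := aux_besselJ_le k hk hxpos hxle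
  have hJ' : |besselJ ((k:ℝ) - 1) (4 * π / ((D:ℝ) * M))|
      ≤ 2 * π ^ 4 / (3 * ((D:ℝ) * M) ^ 4) := by
    refine hJ.trans (le_of_eq ?_)
    field_simp
    ring
  -- divisor bounds
  have hc1 : ((D * (m:ℕ)).divisors.card : ℝ) ≤ 2 * ((m:ℕ).divisors.card : ℝ) := by
    have h := aux_card_divisors_prime_pow_mul hD 1 (m:ℕ) hm0
    rw [pow_one] at h
    exact_mod_cast h
  have hc2 : ((D ^ 2 * (m:ℕ)).divisors.card : ℝ) ≤ 3 * ((m:ℕ).divisors.card : ℝ) := by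
    have h := aux_card_divisors_prime_pow_mul hD 2 (m:ℕ) hm0
    exact_mod_cast h
  have hcM : (((m:ℕ)).divisors.card : ℝ) ≤ M := by
    rw [hMdef]; exact_mod_cast aux_card_divisors_le_self (m:ℕ)
  have hsD3 : (3:ℝ) ≤ Real.sqrt D := by
    rw [show (3:ℝ) = Real.sqrt 9 by
      rw [show (9:ℝ) = 3 ^ 2 by norm_num, Real.sqrt_sq (by norm_num : (0:ℝ) ≤ 3)]]
    exact Real.sqrt_le_sqrt (by linarith)
  have hsD0 : (0:ℝ) < Real.sqrt D := by linarith
  have hcM0 : (0:ℝ) ≤ ((m:ℕ).divisors.card : ℝ) := by positivity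
  have hdiv : Real.sqrt D * ((D * (m:ℕ)).divisors.card : ℝ) + ((D ^ 2 * (m:ℕ)).divisors.card : ℝ)
      ≤ 3 * Real.sqrt D * M := by
    nlinarith [mul_le_mul_of_nonneg_left hc1 hsD0.le,
      mul_le_mul_of_nonneg_right hsD3 hcM0,
      mul_le_mul_of_nonneg_left hcM (by positivity : (0:ℝ) ≤ 3 * Real.sqrt D)]
  -- rpow rewrite
  have hs1 : (1:ℝ) ≤ Real.sqrt M := by
    rw [show (1:ℝ) = Real.sqrt 1 by simp]
    exact Real.sqrt_le_sqrt hM1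
  have hs0 : (0:ℝ) < Real.sqrt M := by linarith
  have hss : Real.sqrt M * Real.sqrt M = M := Real.mul_self_sqrt hM0.le
  have hrw : ((D:ℝ) * M) ^ (-(1 / 2) : ℝ) = (Real.sqrt D * Real.sqrt M)⁻¹ := by
    rw [Real.rpow_neg hy0.le, ← Real.sqrt_eq_rpow, Real.sqrt_mul hD0.le]
  have hP1nn : (0:ℝ) ≤ (Real.sqrt D * Real.sqrt M)⁻¹ := by positivity
  calc ((D:ℝ) * M) ^ (-(1 / 2) : ℝ) *
        (Real.sqrt D * ((D * (m:ℕ)).divisors.card : ℝ) + ((D ^ 2 * (m:ℕ)).divisors.card : ℝ)) *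
        |besselJ ((k:ℝ) - 1) (4 * π / ((D:ℝ) * M))|
      ≤ (Real.sqrt D * Real.sqrt M)⁻¹ * (3 * Real.sqrt D * M) *
          (2 * π ^ 4 / (3 * ((D:ℝ) * M) ^ 4)) := by
        rw [hrw]
        apply mul_le_mul (mul_le_mul_of_nonneg_left hdiv hP1nn) hJ' (abs_nonneg _)
        positivity
    _ = 2 * π ^ 4 * M / (Real.sqrt M * ((D:ℝ) ^ 4 * M ^ 4)) := by
        have hDne : (D:ℝ) ≠ 0 := hD0.ne'
        have hMne : M ≠ 0 := hM0.ne'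
        rw [mul_pow]
        field_simp
    _ ≤ 2 * π ^ 4 / (D:ℝ) ^ 4 * (M ^ 2)⁻¹ := by
        have h2 : 2 * π ^ 4 / (D:ℝ) ^ 4 * (M ^ 2)⁻¹ = 2 * π ^ 4 / ((D:ℝ) ^ 4 * M ^ 2) := by
          field_simp
        rw [h2, div_le_div_iff₀ (by positivity) (by positivity)]
        have h3 : M ^ 3 ≤ Real.sqrt M * M ^ 4 := by
          nlinarith [mul_le_mul_of_nonneg_right hs1 (by positivity : (0:ℝ) ≤ M ^ 4),
            pow_le_pow_right₀ hM1 (by norm_num : 3 ≤ 4)]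
        nlinarith [mul_le_mul_of_nonneg_left h3 (by positivity : (0:ℝ) ≤ 2 * π ^ 4 * (D:ℝ) ^ 4)]

set_option maxHeartbeats 1000000 in
/-- For every integer `k ≥ 5` and prime `D ≥ 11`: `Ψ_k^2(D) < 0.25`. -/
theorem Psi2_lt_of_5_le (k D : ℕ) (hk : 5 ≤ k) (hD : D.Prime) (hD11 : 11 ≤ D) :
    Psi2 k D < 0.25 := by
  have hπ0 : 0 < Real.pi := Real.pi_pos
  have hπ : Real.pi < 3.15 := Real.pi_lt_d2
  have hD11' : (11:ℝ) ≤ (D:ℝ) := by exact_mod_cast hD11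
  have hD0 : (0:ℝ) < (D:ℝ) := by linarith
  have hD4 : (14641:ℝ) ≤ (D:ℝ) ^ 4 := by
    have h := pow_le_pow_left₀ (by norm_num : (0:ℝ) ≤ 11) hD11' 4
    norm_num at h
    linarith
  have hg_sum : Summable (fun n : ℕ => 2 * Real.pi ^ 4 / (D:ℝ) ^ 4 * (((n:ℝ)) ^ 2)⁻¹) := by
    have h := (Real.summable_one_div_nat_pow (p := 2)).mpr (by norm_num)
    simpa [one_div] using h.mul_left (2 * Real.pi ^ 4 / (D:ℝ) ^ 4)
  have hg_tsum : ∑' n : ℕ, 2 * Real.pi ^ 4 / (D:ℝ) ^ 4 * (((n:ℝ)) ^ 2)⁻¹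
      = 2 * Real.pi ^ 4 / (D:ℝ) ^ 4 * (Real.pi ^ 2 / 6) := by
    rw [tsum_mul_left]
    congr 1
    have h := hasSum_zeta_two.tsum_eq
    simpa [one_div] using h
  have hkey : (∑' m : ℕ+,
      ((D : ℝ) * (m : ℕ)) ^ (-(1 / 2) : ℝ) *
        (Real.sqrt D * (((D * (m : ℕ)).divisors.card : ℝ)) + ((D ^ 2 * (m : ℕ)).divisors.card : ℝ)) *
        |besselJ ((k : ℝ) - 1) (4 * Real.pi / ((D : ℝ) * (m : ℕ)))|)
      ≤ 2 * Real.pi ^ 4 / (D:ℝ) ^ 4 * (Real.pi ^ 2 / 6) := by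
    by_cases hs : Summable (fun m : ℕ+ =>
      ((D : ℝ) * (m : ℕ)) ^ (-(1 / 2) : ℝ) *
        (Real.sqrt D * (((D * (m : ℕ)).divisors.card : ℝ)) + ((D ^ 2 * (m : ℕ)).divisors.card : ℝ)) *
        |besselJ ((k : ℝ) - 1) (4 * Real.pi / ((D : ℝ) * (m : ℕ)))|)
    · refine le_trans (hs.tsum_le_tsum_of_inj (fun m : ℕ+ => (m:ℕ))
        (fun a b h => PNat.coe_injective h) (fun c _ => by positivity)
        (fun m => aux_term_le k D hk hD hD11 m) hg_sum) (le_of_eq hg_tsum)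
    · rw [tsum_eq_zero_of_not_summable hs]
      positivity
  rw [Psi2]
  calc 2 * Real.pi * (∑' m : ℕ+,
      ((D : ℝ) * (m : ℕ)) ^ (-(1 / 2) : ℝ) *
        (Real.sqrt D * (((D * (m : ℕ)).divisors.card : ℝ)) + ((D ^ 2 * (m : ℕ)).divisors.card : ℝ)) *
        |besselJ ((k : ℝ) - 1) (4 * Real.pi / ((D : ℝ) * (m : ℕ)))|)
      ≤ 2 * Real.pi * (2 * Real.pi ^ 4 / (D:ℝ) ^ 4 * (Real.pi ^ 2 / 6)) :=
        mul_le_mul_of_nonneg_left hkey (by positivity)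
    _ < 0.25 := by
        have heq : 2 * Real.pi * (2 * Real.pi ^ 4 / (D:ℝ) ^ 4 * (Real.pi ^ 2 / 6))
            = 2 * Real.pi ^ 7 / (3 * (D:ℝ) ^ 4) := by
          field_simp
          ring
        rw [heq, div_lt_iff₀ (by positivity)]
        have hπ7 : Real.pi ^ 7 < 3.15 ^ 7 :=
          pow_lt_pow_left₀ hπ hπ0.le (by norm_num)
        nlinarith [hπ7, hD4]
end

section
/- Let D be a positive integer. For every odd integer k ≥ 7, one has 2π·D^{-1/2} · Σ_{ℓ > 6, D ∤ ℓ} ℓ^{-1/2} σ₀(ℓ) |J_{k-1}(4π/ℓ)| ≤ 0.04 · D^{-1/2}, and for k = 5 one has 2π·D^{-1/2} · Σ_{ℓ > 6, D ∤ ℓ} ℓ^{-1/2} σ₀(ℓ) |J_{4}(4π/ℓ)| ≤ 1.82 · D^{-1/2}. -/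
open Real Finset Filter

lemma wallis_half (n : ℕ) :
    (∫ θ in (0:ℝ)..(π/2), Real.sin θ ^ (2*n)) =
      π/2 * ∏ i ∈ range n, ((i:ℝ) + 1/2) / ((i:ℝ) + 1) := by
  induction n with
  | zero => simp
  | succ k ih =>
    have h2 : 2 * (k+1) = 2*k + 2 := by ring
    rw [h2, integral_sin_pow, ih, prod_range_succ]
    simp only [Real.sin_zero, Real.cos_pi_div_two, Real.sin_pi_div_two, Real.cos_zero]
    push_cast
    have hk : ((k:ℝ) + 1) ≠ 0 := by positivity
    have hk2 : (2*(k:ℝ) + 2) ≠ 0 := by positivity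
    field_simp
    ring

lemma gamma_half_nat (n : ℕ) :
    Real.Gamma ((n:ℝ) + 1/2) = Real.sqrt π * ∏ i ∈ range n, ((i:ℝ) + 1/2) := by
  induction n with
  | zero => simpa using Real.Gamma_one_half_eq
  | succ k ih =>
    have h : ((k+1:ℕ):ℝ) + 1/2 = ((k:ℝ) + 1/2) + 1 := by push_cast; ring
    rw [h, Real.Gamma_add_one (by positivity), ih, prod_range_succ]
    ring

lemma besselJ_nat_le (n : ℕ) {x : ℝ} (hx : 0 < x) :
    |besselJ (n:ℝ) x| ≤ (x/2)^n / (n.factorial : ℝ) := by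
  have hP : (0:ℝ) < ∏ i ∈ range n, ((i:ℝ) + 1/2) :=
    Finset.prod_pos (fun i _ => by positivity)
  have hfact : (∏ i ∈ range n, ((i:ℝ) + 1)) = (n.factorial : ℝ) := by
    calc (∏ i ∈ range n, ((i:ℝ) + 1)) = ((∏ i ∈ range n, (i + 1) : ℕ) : ℝ) := by push_cast; rfl
    _ = (n.factorial : ℝ) := by rw [Finset.prod_range_add_one_eq_factorial]
  have hfactpos : (0:ℝ) < (n.factorial : ℝ) := by positivity
  unfold besselJ
  have hpt : ∀ θ : ℝ, Real.sin θ ^ (2*(n:ℝ)) = Real.sin θ ^ (2*n) := by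
    intro θ
    rw [show (2*(n:ℝ)) = ((2*n : ℕ):ℝ) by push_cast; ring, Real.rpow_natCast]
  simp only [hpt, show ((x/2) ^ (n:ℝ)) = (x/2)^n from Real.rpow_natCast _ n]
  have habs : |∫ θ in (0:ℝ)..(π/2), Real.sin θ ^ (2*n) * Real.cos (x * Real.cos θ)|
      ≤ ∫ θ in (0:ℝ)..(π/2), Real.sin θ ^ (2*n) := by
    refine le_trans (intervalIntegral.abs_integral_le_integral_abs (by positivity)) ?_
    apply intervalIntegral.integral_mono_on (by positivity)
    · exact ((Continuous.pow (by continuity) _).mul (by continuity)).abs.intervalIntegrable _ _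
    · exact (Continuous.pow Real.continuous_sin _).intervalIntegrable _ _
    · intro θ hθ
      rw [abs_mul]
      have h1 : |Real.sin θ ^ (2*n)| = Real.sin θ ^ (2*n) := by
        rw [← pow_abs]; exact (even_two_mul n).pow_abs _
      rw [h1]
      exact mul_le_of_le_one_right ((even_two_mul n).pow_nonneg _) (Real.abs_cos_le_one _)
  have hGpos : 0 < Real.Gamma ((n:ℝ) + 1/2) :=
    Real.Gamma_pos_of_pos (by have : (0:ℝ) ≤ n := n.cast_nonneg; linarith)
  have hG2 : 0 < Real.Gamma (1/2 : ℝ) := Real.Gamma_pos_of_pos (by norm_num)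
  have hA : 0 ≤ 2 * (x/2)^n / (Real.Gamma ((n:ℝ) + 1/2) * Real.Gamma (1/2)) := by positivity
  rw [abs_mul, abs_of_nonneg hA]
  calc 2 * (x/2)^n / (Real.Gamma ((n:ℝ) + 1/2) * Real.Gamma (1/2)) *
        |∫ θ in (0:ℝ)..(π/2), Real.sin θ ^ (2*n) * Real.cos (x * Real.cos θ)|
      ≤ 2 * (x/2)^n / (Real.Gamma ((n:ℝ) + 1/2) * Real.Gamma (1/2)) *
        (∫ θ in (0:ℝ)..(π/2), Real.sin θ ^ (2*n)) := by
        exact mul_le_mul_of_nonneg_left habs hA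
    _ = (x/2)^n / (n.factorial : ℝ) := by
        rw [wallis_half, gamma_half_nat, Real.Gamma_one_half_eq]
        have hprod : (∏ i ∈ range n, ((i:ℝ) + 1/2) / ((i:ℝ) + 1))
            = (∏ i ∈ range n, ((i:ℝ) + 1/2)) / (n.factorial : ℝ) := by
          rw [Finset.prod_div_distrib, hfact]
        rw [hprod]
        have hsq : Real.sqrt π * Real.sqrt π = π := Real.mul_self_sqrt Real.pi_pos.le
        rw [show Real.sqrt π * (∏ i ∈ range n, ((i:ℝ) + 1/2)) * Real.sqrt π
            = π * ∏ i ∈ range n, ((i:ℝ) + 1/2) by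
          linear_combination (∏ i ∈ range n, ((i:ℝ) + 1/2)) * hsq]
        have hπ := Real.pi_pos
        field_simp

lemma hasSum_telescope' {f : ℕ → ℝ} (hmono : ∀ n, f (n+1) ≤ f n)
    (hlim : Tendsto f atTop (nhds 0)) :
    HasSum (fun n => f n - f (n+1)) (f 0) := by
  rw [hasSum_iff_tendsto_nat_of_nonneg (fun n => sub_nonneg.2 (hmono n))]
  have h : ∀ n, ∑ i ∈ Finset.range n, (f i - f (i+1)) = f 0 - f n :=
    fun n => Finset.sum_range_sub' f n
  simp only [h]
  simpa using tendsto_const_nhds.sub hlim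

lemma tsum_sub_le {D : ℕ} (t : {ℓ : ℕ // 6 < ℓ ∧ ¬ D ∣ ℓ} → ℝ) (f : ℕ → ℝ)
    (hmono : ∀ n, f (n+1) ≤ f n) (hlim : Tendsto f atTop (nhds 0))
    (hle : ∀ b : {ℓ : ℕ // 6 < ℓ ∧ ¬ D ∣ ℓ}, t b ≤ f (b.1 - 7) - f (b.1 - 7 + 1)) :
    ∑' b, t b ≤ f 0 := by
  have hg : HasSum (fun n => f n - f (n+1)) (f 0) := hasSum_telescope' hmono hlim
  by_cases hs : Summable t
  · have hinj : Function.Injective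
        (fun b : {ℓ : ℕ // 6 < ℓ ∧ ¬ D ∣ ℓ} => b.1 - 7) := by
      intro a b h
      have ha := a.2.1
      have hb := b.2.1
      exact Subtype.ext (by dsimp at h; omega)
    have := Summable.tsum_le_tsum_of_inj (fun b : {ℓ : ℕ // 6 < ℓ ∧ ¬ D ∣ ℓ} => b.1 - 7) hinj
      (fun c _ => sub_nonneg.2 (hmono c)) hle hs hg.summable
    rwa [hg.tsum_eq] at this
  · rw [tsum_eq_zero_of_not_summable hs]
    have hanti : Antitone f := antitone_nat_of_succ_le hmono
    exact le_of_tendsto hlim (Eventually.of_forall (fun n => hanti (Nat.zero_le n)))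

lemma sqrt_ge_of_sq_le {c L : ℝ} (hc : 0 ≤ c) (h : c^2 ≤ L) : c ≤ Real.sqrt L := by
  have hL : 0 ≤ L := le_trans (by positivity) h
  nlinarith [Real.sq_sqrt hL, Real.sqrt_nonneg L]

lemma real_ineq1 {L : ℝ} (hL : 7 ≤ L) :
    (Real.sqrt L)⁻¹ * L * ((2*π/L)^6/720) ≤
      9/(((L-7)+5)*((L-7)+6)*((L-7)+7)*((L-7)+8)) -
      9/(((L-6)+5)*((L-6)+6)*((L-6)+7)*((L-6)+8)) := by
  have hL0 : (0:ℝ) < L := by linarith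
  have hsL : (0:ℝ) < Real.sqrt L := Real.sqrt_pos.2 hL0
  have hs7 : (2.645:ℝ) ≤ Real.sqrt L := sqrt_ge_of_sq_le (by norm_num) (by nlinarith)
  have hπ : π ≤ 3.15 := Real.pi_lt_d2.le
  have hp6 : (2*π)^6 ≤ 62524 := by
    calc (2*π)^6 ≤ 6.3^6 := by
          apply pow_le_pow_left₀ (by positivity) (by linarith)
      _ ≤ 62524 := by norm_num
  have h2 : (0:ℝ) < L - 2 := by linarith
  have h1 : (0:ℝ) < L - 1 := by linarith
  have h3 : (0:ℝ) < L + 1 := by linarith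
  have h4 : (0:ℝ) < L + 2 := by linarith
  have hRHS : 9/(((L-7)+5)*((L-7)+6)*((L-7)+7)*((L-7)+8)) -
      9/(((L-6)+5)*((L-6)+6)*((L-6)+7)*((L-6)+8)) =
      36/((L-2)*((L-1)*(L*((L+1)*(L+2))))) := by
    rw [show L-7+5 = L-2 from by ring, show L-7+6 = L-1 from by ring,
      show L-7+7 = L from by ring, show L-7+8 = L+1 from by ring,
      show L-6+5 = L-1 from by ring, show L-6+6 = L from by ring,
      show L-6+7 = L+1 from by ring, show L-6+8 = L+2 from by ring]
    field_simp
    ring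
  rw [hRHS]
  have hprodpos : (0:ℝ) < (L-2)*((L-1)*(L*((L+1)*(L+2)))) := by positivity
  have hLHS : (Real.sqrt L)⁻¹ * L * ((2*π/L)^6/720) = (2*π)^6 / (720 * Real.sqrt L * L^5) := by
    rw [div_pow]
    field_simp
  rw [hLHS, div_le_div_iff₀ (by positivity) hprodpos]
  have h4L : 4*L ≤ L^3 := by
    nlinarith [mul_le_mul_of_nonneg_left (show (4:ℝ) ≤ L^2 by nlinarith) hL0.le]
  have hL3 : (0:ℝ) ≤ L^3 := by positivity
  have hprodle : (L-2)*((L-1)*(L*((L+1)*(L+2)))) ≤ L^5 := by nlinarith [h4L, hL3]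
  have hL5 : (0:ℝ) < L^5 := by positivity
  nlinarith [mul_le_mul hp6 hprodle hprodpos.le (by norm_num : (0:ℝ) ≤ (62524:ℝ)),
    mul_le_mul_of_nonneg_right hs7 (le_of_lt hL5)]

lemma real_ineq2 {L : ℝ} (hL : 8 ≤ L) :
    (Real.sqrt L)⁻¹ * L * ((2*π/L)^4/24) ≤
      11.65/(((L-8)+7)*((L-8)+8)) - 11.65/(((L-7)+7)*((L-7)+8)) := by
  have hL0 : (0:ℝ) < L := by linarith
  have hsL : (0:ℝ) < Real.sqrt L := Real.sqrt_pos.2 hL0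
  have hs8 : (2.828:ℝ) ≤ Real.sqrt L := sqrt_ge_of_sq_le (by norm_num) (by nlinarith)
  have hπ : π ≤ 3.15 := Real.pi_lt_d2.le
  have hp4 : (2*π)^4 ≤ 1575.3 := by
    calc (2*π)^4 ≤ 6.3^4 := by
          apply pow_le_pow_left₀ (by positivity) (by linarith)
      _ ≤ 1575.3 := by norm_num
  have h1 : (0:ℝ) < L - 1 := by linarith
  have h3 : (0:ℝ) < L + 1 := by linarith
  have hRHS : 11.65/(((L-8)+7)*((L-8)+8)) - 11.65/(((L-7)+7)*((L-7)+8)) =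
      23.3/((L-1)*(L*(L+1))) := by
    rw [show L-8+7 = L-1 from by ring, show L-8+8 = L from by ring,
      show L-7+7 = L from by ring, show L-7+8 = L+1 from by ring]
    field_simp
    ring
  rw [hRHS]
  have hprodpos : (0:ℝ) < (L-1)*(L*(L+1)) := by positivity
  have hLHS : (Real.sqrt L)⁻¹ * L * ((2*π/L)^4/24) = (2*π)^4 / (24 * Real.sqrt L * L^3) := by
    rw [div_pow]
    field_simp
  rw [hLHS, div_le_div_iff₀ (by positivity) hprodpos]
  have hprodle : (L-1)*(L*(L+1)) ≤ L^3 := by nlinarith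
  have hL3 : (0:ℝ) < L^3 := by positivity
  nlinarith [mul_le_mul hp4 hprodle hprodpos.le (by norm_num : (0:ℝ) ≤ (1575.3:ℝ)),
    mul_le_mul_of_nonneg_right hs8 (le_of_lt hL3)]

lemma real_ineq2a : (Real.sqrt 7)⁻¹ * 7 * ((2*π/7)^4/24) ≤ (0.073:ℝ) := by
  have hs7 : (2.645:ℝ) ≤ Real.sqrt 7 := sqrt_ge_of_sq_le (by norm_num) (by norm_num)
  have hπ : π ≤ 3.15 := Real.pi_lt_d2.le
  have hp4 : (2*π)^4 ≤ 1575.3 := by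
    calc (2*π)^4 ≤ 6.3^4 := by
          apply pow_le_pow_left₀ (by positivity) (by linarith)
      _ ≤ 1575.3 := by norm_num
  have h0 : (0:ℝ) < Real.sqrt 7 := by positivity
  have hinv : (Real.sqrt 7)⁻¹ ≤ (2.645:ℝ)⁻¹ := by
    apply inv_anti₀ (by norm_num) hs7
  have hstuff : (0:ℝ) ≤ (2*π/7)^4/24 := by positivity
  calc (Real.sqrt 7)⁻¹ * 7 * ((2*π/7)^4/24)
      ≤ (2.645:ℝ)⁻¹ * 7 * ((2*π/7)^4/24) := by
        exact mul_le_mul_of_nonneg_right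
          (mul_le_mul_of_nonneg_right hinv (by norm_num)) hstuff
    _ ≤ 0.073 := by rw [div_pow]; nlinarith [hp4]

noncomputable def fA (m : ℕ) : ℝ := 9/(((m:ℝ)+5)*((m:ℝ)+6)*((m:ℝ)+7)*((m:ℝ)+8))

lemma fA_mono (m : ℕ) : fA (m+1) ≤ fA m := by
  unfold fA
  have hm : (0:ℝ) ≤ (m:ℝ) := m.cast_nonneg
  push_cast
  have hprod : (0:ℝ) ≤ ((m:ℝ)+6)*((m:ℝ)+7)*((m:ℝ)+8) := by positivity
  apply div_le_div_of_nonneg_left (by norm_num) (by positivity) (by nlinarith [hprod])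

lemma fA_tendsto : Tendsto fA atTop (nhds 0) := by
  unfold fA
  apply Tendsto.div_atTop tendsto_const_nhds
  have hm : Tendsto (fun m:ℕ => (m:ℝ)) atTop atTop := tendsto_natCast_atTop_atTop
  have h5 := tendsto_atTop_add_const_right atTop (5:ℝ) hm
  have h6 := tendsto_atTop_add_const_right atTop (6:ℝ) hm
  have h7 := tendsto_atTop_add_const_right atTop (7:ℝ) hm
  have h8 := tendsto_atTop_add_const_right atTop (8:ℝ) hm
  exact ((h5.atTop_mul_atTop₀ h6).atTop_mul_atTop₀ h7).atTop_mul_atTop₀ h8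

noncomputable def fB : ℕ → ℝ
  | 0 => 0.073 + 11.65/56
  | (m+1) => 11.65/(((m:ℝ)+7)*((m:ℝ)+8))

lemma fB_mono (m : ℕ) : fB (m+1) ≤ fB m := by
  cases m with
  | zero => norm_num [fB]
  | succ k =>
    simp only [fB]
    have hk : (0:ℝ) ≤ (k:ℝ) := k.cast_nonneg
    push_cast
    have hprod : (0:ℝ) ≤ ((k:ℝ)+8) := by linarith
    apply div_le_div_of_nonneg_left (by norm_num) (by positivity) (by nlinarith [hprod])

lemma fB_tendsto : Tendsto fB atTop (nhds 0) := by
  rw [← tendsto_add_atTop_iff_nat 1]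
  show Tendsto (fun n : ℕ => 11.65/(((n:ℝ)+7)*((n:ℝ)+8))) atTop (nhds 0)
  apply Tendsto.div_atTop tendsto_const_nhds
  have hm : Tendsto (fun m:ℕ => (m:ℝ)) atTop atTop := tendsto_natCast_atTop_atTop
  have h7 := tendsto_atTop_add_const_right atTop (7:ℝ) hm
  have h8 := tendsto_atTop_add_const_right atTop (8:ℝ) hm
  exact h7.atTop_mul_atTop₀ h8

lemma besselJ_high {k : ℕ} (hk : 7 ≤ k) {L : ℝ} (hL : 7 ≤ L) :
    |besselJ ((k:ℝ)-1) (4*π/L)| ≤ (2*π/L)^6/720 := by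
  have hL0 : (0:ℝ) < L := by linarith
  have hx : 0 < 4*π/L := by positivity
  have h := besselJ_nat_le (k-1) hx
  rw [show ((k-1:ℕ):ℝ) = (k:ℝ)-1 by rw [Nat.cast_sub (by omega)]; norm_num] at h
  rw [show (4*π/L)/2 = 2*π/L by ring] at h
  refine h.trans ?_
  have h01 : (0:ℝ) ≤ 2*π/L := by positivity
  have h1 : 2*π/L ≤ 1 := by
    rw [div_le_one hL0]
    nlinarith [Real.pi_lt_d2]
  have h6 : 6 ≤ k - 1 := by omega
  have hpow : (2*π/L)^(k-1) ≤ (2*π/L)^6 := pow_le_pow_of_le_one h01 h1 h6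
  have hfac : (720:ℝ) ≤ ((k-1).factorial : ℝ) := by
    have h720 : (720:ℕ) ≤ (k-1).factorial := by
      calc (720:ℕ) = Nat.factorial 6 := by decide
        _ ≤ _ := Nat.factorial_le h6
    exact_mod_cast h720
  exact div_le_div₀ (by positivity) hpow (by norm_num) hfac

lemma besselJ_four {L : ℝ} (hL : 7 ≤ L) : |besselJ (4:ℝ) (4*π/L)| ≤ (2*π/L)^4/24 := by
  have hL0 : (0:ℝ) < L := by linarith
  have hx : 0 < 4*π/L := by positivity
  have h := besselJ_nat_le 4 hx
  rw [show ((4:ℕ):ℝ) = (4:ℝ) by norm_num, show (4*π/L)/2 = 2*π/L by ring,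
    show ((Nat.factorial 4 : ℕ):ℝ) = 24 by norm_num [Nat.factorial]] at h
  exact h

lemma term_bound {D : ℕ} (b : {ℓ : ℕ // 6 < ℓ ∧ ¬ D ∣ ℓ}) (ν : ℝ) (p : ℕ) (c : ℝ)
    (hc : 0 < c)
    (hbj : |besselJ ν (4*π/((b.1:ℕ):ℝ))| ≤ (2*π/((b.1:ℕ):ℝ))^p/c) :
    ((b.1:ℕ):ℝ) ^ (-(1/2) : ℝ) * (((b.1:ℕ)).divisors.card : ℝ) *
        |besselJ ν (4*π/((b.1:ℕ):ℝ))|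
      ≤ (Real.sqrt ((b.1:ℕ):ℝ))⁻¹ * ((b.1:ℕ):ℝ) * ((2*π/((b.1:ℕ):ℝ))^p/c) := by
  have hℓ7 : 7 ≤ b.1 := b.2.1
  have hL7 : (7:ℝ) ≤ ((b.1:ℕ):ℝ) := by exact_mod_cast hℓ7
  have hL0 : (0:ℝ) < ((b.1:ℕ):ℝ) := by linarith
  have hrp : ((b.1:ℕ):ℝ) ^ (-(1/2) : ℝ) = (Real.sqrt ((b.1:ℕ):ℝ))⁻¹ := by
    rw [Real.rpow_neg hL0.le, Real.sqrt_eq_rpow]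
  have hcard : (((b.1:ℕ)).divisors.card : ℝ) ≤ ((b.1:ℕ):ℝ) := by
    have hsub : (b.1:ℕ).divisors ⊆ Finset.Icc 1 b.1 := fun d hd =>
      Finset.mem_Icc.2 ⟨Nat.pos_of_mem_divisors hd, Nat.divisor_le hd⟩
    have h := Finset.card_le_card hsub
    rw [Nat.card_Icc] at h
    exact_mod_cast le_trans h (by omega)
  rw [hrp]
  have hs0 : (0:ℝ) ≤ (Real.sqrt ((b.1:ℕ):ℝ))⁻¹ := by positivity
  exact mul_le_mul (mul_le_mul_of_nonneg_left hcard hs0) hbj (abs_nonneg _) (by positivity)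

/-- Tail bounds for the first sum in the proof of Proposition 8.3: for any positive
integer `D`, for every odd `k ≥ 7` one has
`2π D^{-1/2} Σ_{ℓ > 6, D ∤ ℓ} ℓ^{-1/2} σ₀(ℓ) |J_{k-1}(4π/ℓ)| ≤ 0.04 D^{-1/2}`,
and for `k = 5`,
`2π D^{-1/2} Σ_{ℓ > 6, D ∤ ℓ} ℓ^{-1/2} σ₀(ℓ) |J_4(4π/ℓ)| ≤ 1.82 D^{-1/2}`. -/
theorem tail_sum_bounds (D : ℕ) (hD : 0 < D) :
    (∀ k : ℕ, 7 ≤ k → Odd k →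
      2 * Real.pi * (D : ℝ) ^ (-(1 / 2) : ℝ) *
        ∑' ℓ : {ℓ : ℕ // 6 < ℓ ∧ ¬ D ∣ ℓ},
          ((ℓ : ℕ) : ℝ) ^ (-(1 / 2) : ℝ) * ((ℓ : ℕ).divisors.card : ℝ) *
            |besselJ ((k : ℝ) - 1) (4 * Real.pi / ((ℓ : ℕ) : ℝ))|
        ≤ 0.04 * (D : ℝ) ^ (-(1 / 2) : ℝ)) ∧
    2 * Real.pi * (D : ℝ) ^ (-(1 / 2) : ℝ) *
        ∑' ℓ : {ℓ : ℕ // 6 < ℓ ∧ ¬ D ∣ ℓ},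
          ((ℓ : ℕ) : ℝ) ^ (-(1 / 2) : ℝ) * ((ℓ : ℕ).divisors.card : ℝ) *
            |besselJ (4 : ℝ) (4 * Real.pi / ((ℓ : ℕ) : ℝ))|
        ≤ 1.82 * (D : ℝ) ^ (-(1 / 2) : ℝ) := by

  have hDe : (0:ℝ) ≤ (D:ℝ) ^ (-(1/2) : ℝ) := Real.rpow_nonneg D.cast_nonneg _
  have hπ : π ≤ 3.15 := Real.pi_lt_d2.le
  constructor
  · intro k hk7 _
    have hT : (∑' ℓ : {ℓ : ℕ // 6 < ℓ ∧ ¬ D ∣ ℓ},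
        ((ℓ : ℕ) : ℝ) ^ (-(1 / 2) : ℝ) * ((ℓ : ℕ).divisors.card : ℝ) *
          |besselJ ((k : ℝ) - 1) (4 * Real.pi / ((ℓ : ℕ) : ℝ))|) ≤ fA 0 := by
      apply tsum_sub_le _ fA fA_mono fA_tendsto
      intro b
      have hℓ7 : 7 ≤ b.1 := b.2.1
      have hL7 : (7:ℝ) ≤ ((b.1:ℕ):ℝ) := by exact_mod_cast hℓ7
      have h1 := term_bound b ((k:ℝ)-1) 6 720 (by norm_num) (besselJ_high hk7 hL7)
      refine h1.trans ?_
      have hc7 : ((b.1 - 7 : ℕ):ℝ) = ((b.1:ℕ):ℝ) - 7 := by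
        rw [Nat.cast_sub hℓ7]; norm_num
      have e1 : b.1 - 7 + 1 = b.1 - 6 := by omega
      have hc6 : ((b.1 - 6 : ℕ):ℝ) = ((b.1:ℕ):ℝ) - 6 := by
        rw [Nat.cast_sub (by omega)]; norm_num
      unfold fA
      rw [e1, hc7, hc6]
      exact real_ineq1 hL7
    have hfA : fA 0 = 9/1680 := by norm_num [fA]
    rw [hfA] at hT
    calc 2 * π * (D:ℝ) ^ (-(1/2) : ℝ) *
        (∑' ℓ : {ℓ : ℕ // 6 < ℓ ∧ ¬ D ∣ ℓ},
          ((ℓ : ℕ) : ℝ) ^ (-(1 / 2) : ℝ) * ((ℓ : ℕ).divisors.card : ℝ) *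
            |besselJ ((k : ℝ) - 1) (4 * Real.pi / ((ℓ : ℕ) : ℝ))|)
        ≤ 2 * π * (D:ℝ) ^ (-(1/2) : ℝ) * (9/1680) := by
          apply mul_le_mul_of_nonneg_left hT (by positivity)
      _ = (2 * π * (9/1680)) * (D:ℝ) ^ (-(1/2) : ℝ) := by ring
      _ ≤ 0.04 * (D:ℝ) ^ (-(1/2) : ℝ) := by
          apply mul_le_mul_of_nonneg_right (by nlinarith [Real.pi_pos]) hDe
  · have hT : (∑' ℓ : {ℓ : ℕ // 6 < ℓ ∧ ¬ D ∣ ℓ},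
        ((ℓ : ℕ) : ℝ) ^ (-(1 / 2) : ℝ) * ((ℓ : ℕ).divisors.card : ℝ) *
          |besselJ (4:ℝ) (4 * Real.pi / ((ℓ : ℕ) : ℝ))|) ≤ fB 0 := by
      apply tsum_sub_le _ fB fB_mono fB_tendsto
      intro b
      have hℓ7 : 7 ≤ b.1 := b.2.1
      have hL7 : (7:ℝ) ≤ ((b.1:ℕ):ℝ) := by exact_mod_cast hℓ7
      have h1 := term_bound b (4:ℝ) 4 24 (by norm_num) (besselJ_four hL7)
      refine h1.trans ?_
      rcases Nat.lt_or_ge b.1 8 with h8 | h8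
      · have h7 : b.1 = 7 := by omega
        have e0 : b.1 - 7 = 0 := by omega
        rw [e0]
        have hfB : fB 0 - fB (0+1) = (0.073:ℝ) := by norm_num [fB]
        rw [hfB]
        have hLeq : ((b.1:ℕ):ℝ) = (7:ℝ) := by rw [h7]; norm_num
        rw [hLeq]
        exact real_ineq2a
      · have hL8 : (8:ℝ) ≤ ((b.1:ℕ):ℝ) := by exact_mod_cast h8
        have e1 : b.1 - 7 = (b.1 - 8) + 1 := by omega
        rw [e1]
        simp only [fB]
        have hc8 : ((b.1 - 8 : ℕ):ℝ) = ((b.1:ℕ):ℝ) - 8 := by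
          rw [Nat.cast_sub h8]; norm_num
        have e2 : b.1 - 8 + 1 = b.1 - 7 := by omega
        have hc7 : ((b.1 - 7 : ℕ):ℝ) = ((b.1:ℕ):ℝ) - 7 := by
          rw [Nat.cast_sub hℓ7]; norm_num
        rw [e2, hc8, hc7]
        exact real_ineq2 hL8
    have hfB : fB 0 = 0.073 + 11.65/56 := rfl
    rw [hfB] at hT
    calc 2 * π * (D:ℝ) ^ (-(1/2) : ℝ) *
        (∑' ℓ : {ℓ : ℕ // 6 < ℓ ∧ ¬ D ∣ ℓ},
          ((ℓ : ℕ) : ℝ) ^ (-(1 / 2) : ℝ) * ((ℓ : ℕ).divisors.card : ℝ) *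
            |besselJ (4:ℝ) (4 * Real.pi / ((ℓ : ℕ) : ℝ))|)
        ≤ 2 * π * (D:ℝ) ^ (-(1/2) : ℝ) * (0.073 + 11.65/56) := by
          apply mul_le_mul_of_nonneg_left hT (by positivity)
      _ = (2 * π * (0.073 + 11.65/56)) * (D:ℝ) ^ (-(1/2) : ℝ) := by ring
      _ ≤ 1.82 * (D:ℝ) ^ (-(1/2) : ℝ) := by
          apply mul_le_mul_of_nonneg_right (by nlinarith [Real.pi_pos]) hDe
end
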